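/- arXiv:1011.1686 — 2 statements merged into one kernel-verified Lean document; each statement's English description precedes it below -/
import Mathlib

section
/- Let γ : ℝ → ℂ be a C² immersed loop with Whitney index ind(γ) = k, where k ∈ ℤ, k ≠ 0. Then γ is regularly homotopic to the k-fold circle t ↦ exp(2πik t): there exists a continuous map H : ℝ × [0,1] → ℂ with H(t+1, s) = H(t, s) for all t, s, such that each H(·, s) is continuously differentiable in t with ∂H/∂t(t, s) ≠ 0 for all t, s, the map (t, s) ↦ ∂H/∂t(t, s) is continuous, H(·, 0) = γ, and H(t, 1) = exp(2πik t) for all t. -/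
open MeasureTheory Set intervalIntegral

/-- real part commutes with interval integral of a continuous function -/
lemma WG.re_intInt (F : ℝ → ℂ) (hF : Continuous F) :
    (∫ t in (0:ℝ)..1, F t).re = ∫ t in (0:ℝ)..1, (F t).re := by
  rw [intervalIntegral.integral_of_le (zero_le_one), intervalIntegral.integral_of_le zero_le_one]
  have h : Integrable F (volume.restrict (Ioc (0:ℝ) 1)) :=
    (hF.integrableOn_Ioc)
  have : Complex.re = RCLike.re := rfl
  rw [this, ← integral_re h]

/-- a continuous nonnegative function positive at a point of `[0,1]` has positive integral -/
lemma WG.pos_int (g : ℝ → ℝ) (hg : Continuous g) (hnn : ∀ t, 0 ≤ g t)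
    {t₁ : ℝ} (ht₁ : t₁ ∈ Icc (0:ℝ) 1) (hpos : 0 < g t₁) :
    0 < ∫ t in (0:ℝ)..1, g t := by
  obtain ⟨ε, hε, hb⟩ : ∃ ε > 0, ∀ x, |x - t₁| < ε → g t₁ / 2 < g x := by
    have hca : ContinuousAt g t₁ := hg.continuousAt
    obtain ⟨δ, hδ, h⟩ := Metric.continuousAt_iff.mp hca (g t₁ / 2) (by linarith)
    refine ⟨δ, hδ, fun x hx => ?_⟩
    have h2 := h (show dist x t₁ < δ by simpa [Real.dist_eq] using hx)
    rw [Real.dist_eq] at h2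
    have h3 := (abs_lt.mp h2).1
    linarith
  set ε' : ℝ := min (ε/2) (1/2) with hε'def
  have hε'pos : 0 < ε' := by positivity
  have hε'le : ε' ≤ ε/2 := min_le_left _ _
  have hε'half : ε' ≤ 1/2 := min_le_right _ _
  set a : ℝ := max 0 (t₁ - ε') with ha
  set b : ℝ := min 1 (t₁ + ε') with hb'
  have hab : a < b := by
    rcases le_or_gt t₁ (1/2) with h | h
    · have : b = t₁ + ε' := min_eq_right (by linarith)
      rw [this]
      have : a ≤ t₁ := max_le (ht₁.1) (by linarith)
      linarith
    · have : a = t₁ - ε' := max_eq_right (by linarith)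
      rw [this]
      have : t₁ ≤ b := le_min ht₁.2 (by linarith)
      linarith
  have h01 : Icc a b ⊆ Icc 0 1 := Icc_subset_Icc (le_max_left _ _) (min_le_left _ _)
  have hball : ∀ x ∈ Icc a b, g t₁ / 2 ≤ g x := by
    intro x hx
    apply le_of_lt
    apply hb
    have h1 : t₁ - ε' ≤ x := le_trans (le_max_right _ _) hx.1
    have h2 : x ≤ t₁ + ε' := le_trans hx.2 (min_le_right _ _)
    rw [abs_lt]; constructor <;> [linarith [lt_of_lt_of_le hε'pos (le_of_eq rfl)]; skip]
    all_goals linarith [hε'le, hε]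
  have key : (b - a) * (g t₁ / 2) ≤ ∫ t in a..b, g t := by
    have := intervalIntegral.integral_mono_on hab.le
      (_root_.intervalIntegrable_const (μ := volume) (c := g t₁ / 2)) (hg.intervalIntegrable a b) hball
    rw [intervalIntegral.integral_const] at this
    calc (b-a) * (g t₁ / 2) = (b-a) • (g t₁/2) := (smul_eq_mul ..).symm
    _ ≤ _ := this
  have hsplit : ∫ t in (0:ℝ)..1, g t =
      (∫ t in (0:ℝ)..a, g t) + (∫ t in a..b, g t) + (∫ t in b..1, g t) := by
    rw [intervalIntegral.integral_add_adjacent_intervals (hg.intervalIntegrable 0 a)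
      (hg.intervalIntegrable a b), intervalIntegral.integral_add_adjacent_intervals
      (hg.intervalIntegrable 0 b) (hg.intervalIntegrable b 1)]
  have h1 : 0 ≤ ∫ t in (0:ℝ)..a, g t :=
    intervalIntegral.integral_nonneg (le_max_left _ _) (fun x _ => hnn x)
  have h2 : 0 ≤ ∫ t in b..1, g t := by
    apply intervalIntegral.integral_nonneg _ (fun x _ => hnn x)
    exact min_le_left _ _
  have h3 : 0 < (b - a) * (g t₁ / 2) := by
    apply mul_pos (by linarith) (by linarith)
  linarith

open Complex in
/-- Strict triangle inequality for the integral of `ρ(t)·e^{iθ(t)}` when the direction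
is not constant (witnessed by a point where the direction is antipodal to that at `0`). -/
lemma WG.key (ρ θ : ℝ → ℝ) (hρ : Continuous ρ) (hρpos : ∀ t, 0 < ρ t) (hθ : Continuous θ)
    {t₀ : ℝ} (ht₀ : t₀ ∈ Icc (0:ℝ) 1)
    (hanti : Complex.exp (θ t₀ * Complex.I) = - Complex.exp (θ 0 * Complex.I)) :
    ‖∫ t in (0:ℝ)..1, (ρ t : ℂ) * Complex.exp (θ t * Complex.I)‖ < ∫ t in (0:ℝ)..1, ρ t := by
  set F : ℝ → ℂ := fun t => (ρ t : ℂ) * Complex.exp (θ t * Complex.I) with hF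
  have hFc : Continuous F :=
    (Complex.continuous_ofReal.comp hρ).mul
      (Complex.continuous_exp.comp ((Complex.continuous_ofReal.comp hθ).mul continuous_const))
  set I₁ : ℂ := ∫ t in (0:ℝ)..1, F t with hI₁
  have hnormF : ∀ t, ‖F t‖ = ρ t := by
    intro t
    rw [hF]
    simp only [norm_mul, Complex.norm_exp_ofReal_mul_I, mul_one,
      Complex.norm_real, Real.norm_eq_abs]
    exact abs_of_pos (hρpos t)
  have hR : 0 < ∫ t in (0:ℝ)..1, ρ t :=
    intervalIntegral_pos_of_pos (hρ.intervalIntegrable 0 1) hρpos zero_lt_one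
  by_cases hI : I₁ = 0
  · rw [show ‖I₁‖ = 0 by rw [hI, norm_zero]]; exact hR
  set u : ℂ := I₁ / (‖I₁‖ : ℝ) with hu
  have hnu : ‖u‖ = 1 := by
    rw [hu, norm_div, Complex.norm_real, Real.norm_eq_abs, abs_of_pos (norm_pos_iff.mpr hI),
      div_self (norm_ne_zero_iff.mpr hI)]
  have hcu : (starRingEnd ℂ) u * I₁ = (‖I₁‖ : ℝ) := by
    rw [hu, map_div₀, Complex.conj_ofReal, div_mul_eq_mul_div, Complex.conj_mul']
    rw [sq, mul_div_assoc, div_self (Complex.ofReal_ne_zero.mpr (norm_ne_zero_iff.mpr hI)), mul_one]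
  set g : ℝ → ℝ := fun t => ρ t - ((starRingEnd ℂ) u * F t).re with hg
  have hgc : Continuous g := hρ.sub (Complex.continuous_re.comp (continuous_const.mul hFc))
  have hgnn : ∀ t, 0 ≤ g t := by
    intro t
    have h1 : ((starRingEnd ℂ) u * F t).re ≤ ‖(starRingEnd ℂ) u * F t‖ := Complex.re_le_norm _
    have h2 : ‖(starRingEnd ℂ) u * F t‖ = ρ t := by
      rw [norm_mul, RCLike.norm_conj, hnu, one_mul, hnormF]
    rw [hg]; simp only
    linarith [h1.trans_eq h2]
  have hcre : Continuous fun t => ((starRingEnd ℂ) u * F t).re :=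
    Complex.continuous_re.comp (continuous_const.mul hFc)
  have hgint : ∫ t in (0:ℝ)..1, g t = (∫ t in (0:ℝ)..1, ρ t) - ‖I₁‖ := by
    rw [hg]
    rw [intervalIntegral.integral_sub (hρ.intervalIntegrable 0 1)
      (hcre.intervalIntegrable 0 1)]
    congr 1
    have := WG.re_intInt (fun t => (starRingEnd ℂ) u * F t) (continuous_const.mul hFc)
    rw [← this, intervalIntegral.integral_const_mul, ← hI₁, hcu, Complex.ofReal_re]
  -- find a point where `g` is positive
  have hexists : ∃ t₁ ∈ Icc (0:ℝ) 1, Complex.exp (θ t₁ * Complex.I) ≠ u := by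
    by_contra hcon
    push_neg at hcon
    have h0 := hcon 0 ⟨le_refl 0, zero_le_one⟩
    have h1 := hcon t₀ ht₀
    rw [hanti, h0] at h1
    have : (2:ℂ) * u = 0 := by linear_combination -h1
    have : u = 0 := (mul_eq_zero.mp this).resolve_left two_ne_zero
    rw [this, norm_zero] at hnu
    norm_num at hnu
  obtain ⟨t₁, ht₁, hne⟩ := hexists
  have hzre : ((starRingEnd ℂ) u * Complex.exp (θ t₁ * Complex.I)).re < 1 := by
    set z := (starRingEnd ℂ) u * Complex.exp (θ t₁ * Complex.I) with hz
    have hnz : ‖z‖ = 1 := by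
      rw [hz, norm_mul, RCLike.norm_conj, hnu, one_mul,
        Complex.norm_exp_ofReal_mul_I]
    have hle : z.re ≤ 1 := by
      have := Complex.re_le_norm z
      rwa [hnz] at this
    rcases lt_or_eq_of_le hle with h | h
    · exact h
    · exfalso
      have him : z.im = 0 := by
        have h2 : ‖z‖ ^ 2 = z.re ^ 2 + z.im ^ 2 := by
          rw [Complex.sq_norm, Complex.normSq_apply]; ring
        rw [hnz] at h2
        nlinarith
      have hz1 : z = 1 := by
        apply Complex.ext
        · rw [h]; rfl
        · rw [him]; rfl
      -- from z = 1 deduce exp(θ t₁ I) = u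
      apply hne
      have huu : u * (starRingEnd ℂ) u = 1 := by
        rw [Complex.mul_conj, Complex.normSq_eq_norm_sq, hnu]
        norm_num
      calc Complex.exp (θ t₁ * Complex.I)
          = (u * (starRingEnd ℂ) u) * Complex.exp (θ t₁ * Complex.I) := by rw [huu, one_mul]
        _ = u * z := by rw [hz]; ring
        _ = u := by rw [hz1, mul_one]
  have hgt₁ : 0 < g t₁ := by
    have hrw : ((starRingEnd ℂ) u * F t₁).re
        = ρ t₁ * ((starRingEnd ℂ) u * Complex.exp (θ t₁ * Complex.I)).re := by
      rw [hF]
      rw [show (starRingEnd ℂ) u * ((ρ t₁ : ℂ) * Complex.exp (θ t₁ * Complex.I))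
          = (ρ t₁ : ℂ) * ((starRingEnd ℂ) u * Complex.exp (θ t₁ * Complex.I)) by ring]
      exact Complex.re_ofReal_mul _ _
    rw [hg]; simp only [hrw]
    have := hρpos t₁
    nlinarith [hzre]
  have hpos := WG.pos_int g hgc hgnn ht₁ hgt₁
  rw [hgint] at hpos
  linarith

set_option maxHeartbeats 2000000

/-- Whitney–Graustein: a `C²` immersed loop of Whitney index `k ≠ 0` is regularly
homotopic to the `k`-fold circle `t ↦ exp(2πik t)`. -/
theorem whitney_graustein_to_k_fold_circle (γ : ℝ → ℂ) (hγ : ContDiff ℝ 2 γ)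
    (hper : ∀ t, γ (t + 1) = γ t) (himm : ∀ t, deriv γ t ≠ 0)
    (k : ℤ) (hk : k ≠ 0)
    (hind : (1 / (2 * (Real.pi : ℂ) * Complex.I)) *
        (∫ t in (0:ℝ)..1, deriv (deriv γ) t / deriv γ t) = (k : ℂ)) :
    ∃ H : ℝ → ℝ → ℂ,
      ContinuousOn (fun q : ℝ × ℝ => H q.1 q.2) (Set.univ ×ˢ Set.Icc 0 1) ∧
      (∀ t : ℝ, ∀ s ∈ Set.Icc (0:ℝ) 1, H (t + 1) s = H t s) ∧
      (∀ s ∈ Set.Icc (0:ℝ) 1, ContDiff ℝ 1 (fun t => H t s)) ∧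
      (∀ t : ℝ, ∀ s ∈ Set.Icc (0:ℝ) 1, deriv (fun t' => H t' s) t ≠ 0) ∧
      ContinuousOn (fun q : ℝ × ℝ => deriv (fun t' => H t' q.2) q.1)
        (Set.univ ×ˢ Set.Icc 0 1) ∧
      (∀ t, H t 0 = γ t) ∧
      (∀ t : ℝ, H t 1 = Complex.exp (2 * (Real.pi : ℂ) * Complex.I * (k : ℂ) * (t : ℂ))) := by
  have hπ : (0:ℝ) < Real.pi := Real.pi_pos
  -- regularity of the derivatives
  have hγ2 : ContDiff ℝ (1+1) γ := by norm_num; exact hγ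
  obtain ⟨hdiffγ, -, hγ1⟩ := contDiff_succ_iff_deriv.mp hγ2
  have hdγc : Continuous (deriv γ) := hγ1.continuous
  have hdiff1 : Differentiable ℝ (deriv γ) := (contDiff_one_iff_deriv.mp hγ1).1
  have hddγc : Continuous (deriv (deriv γ)) := (contDiff_one_iff_deriv.mp hγ1).2
  -- periodicity of derivatives
  have hdper : ∀ t, deriv γ (t+1) = deriv γ t := by
    intro t
    have he : (fun x => γ (x+1)) = γ := funext hper
    calc deriv γ (t+1) = deriv (fun x => γ (x+1)) t := (deriv_comp_add_const γ 1 t).symm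
      _ = deriv γ t := by rw [he]
  have hddper : ∀ t, deriv (deriv γ) (t+1) = deriv (deriv γ) t := by
    intro t
    have he : (fun x => deriv γ (x+1)) = deriv γ := funext hdper
    calc deriv (deriv γ) (t+1) = deriv (fun x => deriv γ (x+1)) t :=
          (deriv_comp_add_const (deriv γ) 1 t).symm
      _ = deriv (deriv γ) t := by rw [he]
  -- the logarithmic derivative
  set g : ℝ → ℂ := fun t => deriv (deriv γ) t / deriv γ t with hgdef
  have hgc : Continuous g := hddγc.div hdγc himm
  have hgper : ∀ t, g (t+1) = g t := by
    intro t; simp only [hgdef]; rw [hdper, hddper]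
  have hgi : ∀ a b : ℝ, IntervalIntegrable g volume a b := fun a b => hgc.intervalIntegrable a b
  have h2πI : (2*(Real.pi:ℂ)*Complex.I) ≠ 0 := by
    simp [Complex.ext_iff, Real.pi_ne_zero]
  have hgI : (∫ t in (0:ℝ)..1, g t) = 2*(Real.pi:ℂ)*Complex.I*(k:ℂ) := by
    field_simp at hind
    rw [hind]
  obtain ⟨c₀, hc₀⟩ : ∃ c₀, Complex.exp c₀ = deriv γ 0 := by
    have h : deriv γ 0 ∈ Set.range Complex.exp := by
      rw [Complex.range_exp]; exact himm 0
    exact h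
  -- the complex logarithm of the derivative
  set w : ℝ → ℂ := fun t => c₀ + ∫ τ in (0:ℝ)..t, g τ with hwdef
  have hwc : Continuous w :=
    continuous_const.add (intervalIntegral.continuous_primitive hgi 0)
  have hwd : ∀ t, HasDerivAt w (g t) t := by
    intro t
    exact (intervalIntegral.integral_hasDerivAt_right (hgi 0 t)
      hgc.stronglyMeasurable.stronglyMeasurableAtFilter hgc.continuousAt).const_add c₀
  have hw0 : w 0 = c₀ := by simp [hwdef]
  have hexpw : ∀ t, Complex.exp (w t) = deriv γ t := by
    set F : ℝ → ℂ := fun t => deriv γ t * Complex.exp (-w t) with hFdef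
    have hFd : ∀ t, HasDerivAt F 0 t := by
      intro t
      have h1 : HasDerivAt (deriv γ) (deriv (deriv γ) t) t := (hdiff1 t).hasDerivAt
      have h2 : HasDerivAt (fun u => Complex.exp (-w u)) (Complex.exp (-w t) * (-g t)) t :=
        ((hwd t).neg).cexp
      have h3 : HasDerivAt (fun u => deriv γ u * Complex.exp (-w u)) _ t := h1.mul h2
      convert h3 using 1
      have hne := himm t
      simp only [hgdef]
      field_simp
      ring
    have hFconst : ∀ t, F t = F 0 := fun t =>
      is_const_of_deriv_eq_zero (fun x => (hFd x).differentiableAt) (fun x => (hFd x).deriv) t 0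
    intro t
    have h0 : F 0 = 1 := by
      simp only [hFdef, hw0, ← hc₀, ← Complex.exp_add]
      simp only [add_neg_cancel, Complex.exp_zero]
    have ht := (hFconst t).trans h0
    simp only [hFdef] at ht
    rw [Complex.exp_neg, mul_inv_eq_one₀ (Complex.exp_ne_zero _)] at ht
    exact ht.symm
  have hwshift : ∀ t, w (t+1) = w t + 2*(Real.pi:ℂ)*Complex.I*(k:ℂ) := by
    intro t
    have hsplit : ∫ τ in (0:ℝ)..(t+1), g τ = (∫ τ in (0:ℝ)..t, g τ) + ∫ τ in t..(t+1), g τ :=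
      (intervalIntegral.integral_add_adjacent_intervals (hgi 0 t) (hgi t (t+1))).symm
    have hperiodic : Function.Periodic g 1 := hgper
    have heq : ∫ τ in t..(t+1), g τ = ∫ τ in (0:ℝ)..1, g τ := by
      have h := hperiodic.intervalIntegral_add_eq t 0
      simpa using h
    simp only [hwdef]
    rw [hsplit, heq, hgI]; ring
  have hwim : ∀ t, (w (t+1)).im = (w t).im + 2*Real.pi*(k:ℝ) := by
    intro t
    rw [hwshift t]
    simp [Complex.add_im, Complex.mul_im, Complex.mul_re]
  have hwre : ∀ t, (w (t+1)).re = (w t).re := by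
    intro t
    rw [hwshift t]
    simp [Complex.add_re, Complex.mul_re, Complex.mul_im]
  -- the sign of k
  set σ : ℝ := if 0 < k then 1 else -1 with hσdef
  have hσk : 0 < σ * (k:ℝ) := by
    rcases lt_or_gt_of_ne hk with h | h
    · rw [hσdef, if_neg (by omega)]
      have hkr : (k:ℝ) < 0 := by exact_mod_cast h
      nlinarith
    · rw [hσdef, if_pos h]
      have hkr : (0:ℝ) < (k:ℝ) := by exact_mod_cast h
      linarith
  have hσsq : σ * σ = 1 := by rw [hσdef]; split_ifs <;> norm_num
  -- main homotopy data
  set ρ : ℝ → ℝ → ℝ := fun s t => (1-s) * Real.exp ((w t).re) + s * (2*Real.pi*(σ*(k:ℝ)))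
    with hρdef
  set Θ : ℝ → ℝ → ℝ := fun s t => (1-s) * (w t).im + s * (2*Real.pi*(k:ℝ)*t + σ*(Real.pi/2))
    with hΘdef
  set f : ℝ → ℝ → ℂ := fun s t => (ρ s t : ℂ) * Complex.exp ((Θ s t : ℝ) * Complex.I) with hfdef
  have hρc : Continuous (fun q : ℝ × ℝ => ρ q.1 q.2) := by
    apply Continuous.add
    · exact (continuous_const.sub continuous_fst).mul
        (Real.continuous_exp.comp (Complex.continuous_re.comp (hwc.comp continuous_snd)))
    · exact continuous_fst.mul continuous_const
  have hΘc : Continuous (fun q : ℝ × ℝ => Θ q.1 q.2) := by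
    apply Continuous.add
    · exact (continuous_const.sub continuous_fst).mul
        (Complex.continuous_im.comp (hwc.comp continuous_snd))
    · exact continuous_fst.mul (((continuous_const.mul continuous_snd).add continuous_const))
  have hfc : Continuous (fun q : ℝ × ℝ => f q.1 q.2) :=
    (Complex.continuous_ofReal.comp hρc).mul
      (Complex.continuous_exp.comp ((Complex.continuous_ofReal.comp hΘc).mul continuous_const))
  have hρcs : ∀ s, Continuous (ρ s) := fun s => hρc.comp (Continuous.prodMk_right s)
  have hΘcs : ∀ s, Continuous (Θ s) := fun s => hΘc.comp (Continuous.prodMk_right s)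
  have hfcs : ∀ s, Continuous (f s) := fun s => hfc.comp (Continuous.prodMk_right s)
  have hρpos : ∀ s ∈ Icc (0:ℝ) 1, ∀ t, 0 < ρ s t := by
    intro s hs t
    have e1 : 0 < Real.exp ((w t).re) := Real.exp_pos _
    have e2 : 0 < 2*Real.pi*(σ*(k:ℝ)) := by nlinarith
    simp only [hρdef]
    rcases le_or_gt s (1/2) with h1 | h1
    · nlinarith [mul_nonneg hs.1 e2.le]
    · nlinarith [mul_nonneg (by linarith [hs.2] : (0:ℝ) ≤ 1-s) e1.le]
  -- periodicity in t
  have hΘshift : ∀ s t, Θ s (t+1) = Θ s t + 2*Real.pi*(k:ℝ) := by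
    intro s t; simp only [hΘdef]; rw [hwim]; ring
  have hρper : ∀ s t, ρ s (t+1) = ρ s t := by
    intro s t; simp only [hρdef]; rw [hwre]
  have hexp2πk : Complex.exp (((2*Real.pi*(k:ℝ) : ℝ):ℂ) * Complex.I) = 1 := by
    push_cast
    have h := Complex.exp_int_mul_two_pi_mul_I k
    rw [← h]; congr 1; ring
  have hfper : ∀ s t, f s (t+1) = f s t := by
    intro s t
    simp only [hfdef]
    rw [hρper, hΘshift]
    have he : Complex.exp ((↑(Θ s t + 2*Real.pi*(k:ℝ)) : ℂ) * Complex.I)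
        = Complex.exp ((Θ s t : ℂ) * Complex.I) := by
      rw [Complex.ofReal_add, add_mul, Complex.exp_add, hexp2πk, mul_one]
    rw [he]
  -- normalizing integrals
  set R : ℝ → ℝ := fun s => ∫ τ in (0:ℝ)..1, ρ s τ with hRdef
  set c : ℝ → ℂ := fun s => (∫ τ in (0:ℝ)..1, f s τ) / ((R s : ℝ) : ℂ) with hcdef
  have hRpos : ∀ s ∈ Icc (0:ℝ) 1, 0 < R s := fun s hs =>
    intervalIntegral_pos_of_pos ((hρcs s).intervalIntegrable 0 1) (hρpos s hs) zero_lt_one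
  have hRc : Continuous R := by
    apply intervalIntegral.continuous_parametric_intervalIntegral_of_continuous' (μ := volume)
      ?_ 0 1
    exact hρc
  have hNc : Continuous (fun s => ∫ τ in (0:ℝ)..1, f s τ) := by
    apply intervalIntegral.continuous_parametric_intervalIntegral_of_continuous' (μ := volume)
      ?_ 0 1
    exact hfc
  have hccOn : ContinuousOn c (Icc 0 1) := by
    apply ContinuousOn.div hNc.continuousOn
      ((Complex.continuous_ofReal.comp hRc).continuousOn)
    intro s hs
    exact Complex.ofReal_ne_zero.mpr (hRpos s hs).ne'
  -- clamping the parameter to [0,1]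
  set π01 : ℝ → ℝ := fun s => max 0 (min 1 s) with hπ01def
  have hπ01c : Continuous π01 := continuous_const.max (continuous_const.min continuous_id)
  have hπ01mem : ∀ s, π01 s ∈ Icc (0:ℝ) 1 := fun s =>
    ⟨le_max_left _ _, max_le zero_le_one (min_le_left _ _)⟩
  have hπ01eq : ∀ s ∈ Icc (0:ℝ) 1, π01 s = s := by
    intro s hs
    simp only [hπ01def]
    rw [min_eq_right hs.2, max_eq_right hs.1]
  set c' : ℝ → ℂ := fun s => c (π01 s) with hc'def
  have hc'c : Continuous c' := hccOn.comp_continuous hπ01c hπ01mem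
  have hc'eq : ∀ s ∈ Icc (0:ℝ) 1, c' s = c s := by
    intro s hs
    simp only [hc'def]
    rw [hπ01eq s hs]
  -- the field of velocities of the homotopy
  set v : ℝ → ℝ → ℂ := fun s t => f s t - (ρ s t : ℂ) * c' s with hvdef
  have hvc : Continuous (fun q : ℝ × ℝ => v q.1 q.2) :=
    hfc.sub ((Complex.continuous_ofReal.comp hρc).mul (hc'c.comp continuous_fst))
  have hvcs : ∀ s, Continuous (v s) := fun s => hvc.comp (Continuous.prodMk_right s)
  have hvi : ∀ s, ∀ a b : ℝ, IntervalIntegrable (v s) volume a b := fun s a b =>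
    (hvcs s).intervalIntegrable a b
  have hintρ : ∀ s, (∫ τ in (0:ℝ)..1, ((ρ s τ : ℝ):ℂ)) = ((R s : ℝ) : ℂ) := by
    intro s
    simp only [hRdef]
    exact intervalIntegral.integral_ofReal
  have hvint : ∀ s ∈ Icc (0:ℝ) 1, (∫ τ in (0:ℝ)..1, v s τ) = 0 := by
    intro s hs
    simp only [hvdef]
    have hcρ : Continuous fun τ : ℝ => ((ρ s τ : ℝ) : ℂ) * c' s :=
      (Complex.continuous_ofReal.comp (hρcs s)).mul continuous_const
    rw [intervalIntegral.integral_sub ((hfcs s).intervalIntegrable 0 1)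
      (hcρ.intervalIntegrable 0 1)]
    rw [intervalIntegral.integral_mul_const, hintρ, hc'eq s hs, hcdef]
    have hRne : ((R s : ℝ) : ℂ) ≠ 0 := Complex.ofReal_ne_zero.mpr (hRpos s hs).ne'
    field_simp
    ring
  have hvper : ∀ s t, v s (t+1) = v s t := by
    intro s t
    simp only [hvdef]
    rw [hfper, hρper]
  -- the mean direction has norm < 1
  have hclt : ∀ s ∈ Icc (0:ℝ) 1, ‖c s‖ < 1 := by
    intro s hs
    have hΘ1 : Θ s 1 = Θ s 0 + 2*Real.pi*(k:ℝ) := by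
      have h := hΘshift s 0
      rwa [zero_add] at h
    obtain ⟨t₀, ht₀, hanti⟩ : ∃ t₀ ∈ Icc (0:ℝ) 1,
        Complex.exp ((Θ s t₀ : ℝ) * Complex.I) = - Complex.exp ((Θ s 0 : ℝ) * Complex.I) := by
      rcases lt_or_gt_of_ne hk with hneg | hpos
      · have hkr : (k:ℝ) ≤ -1 := by exact_mod_cast (by omega : k ≤ -1)
        have hmem : Θ s 0 - Real.pi ∈ Icc (Θ s 1) (Θ s 0) := by
          rw [hΘ1]
          constructor
          · nlinarith
          · linarith
        obtain ⟨t₀, ht₀, h⟩ := intermediate_value_Icc' zero_le_one ((hΘcs s).continuousOn) hmem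
        refine ⟨t₀, ht₀, ?_⟩
        rw [h, Complex.ofReal_sub, sub_mul, Complex.exp_sub, Complex.exp_pi_mul_I]
        rw [div_neg, div_one]
      · have hkr : (1:ℝ) ≤ (k:ℝ) := by exact_mod_cast hpos
        have hmem : Θ s 0 + Real.pi ∈ Icc (Θ s 0) (Θ s 1) := by
          rw [hΘ1]
          constructor
          · linarith
          · nlinarith
        obtain ⟨t₀, ht₀, h⟩ := intermediate_value_Icc zero_le_one ((hΘcs s).continuousOn) hmem
        refine ⟨t₀, ht₀, ?_⟩
        rw [h, Complex.ofReal_add, add_mul, Complex.exp_add, Complex.exp_pi_mul_I]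
        rw [mul_neg_one]
    have hkey := WG.key (ρ s) (Θ s) (hρcs s) (hρpos s hs) (hΘcs s) ht₀ hanti
    simp only [hcdef, hfdef]
    rw [norm_div, Complex.norm_real, Real.norm_eq_abs, abs_of_pos (hRpos s hs),
      div_lt_one (hRpos s hs)]
    simp only [hRdef]
    exact hkey
  -- the primitive
  have hPswap : Continuous (fun q : ℝ × ℝ => ∫ τ in (0:ℝ)..q.1, v q.2 τ) := by
    have h := intervalIntegral.continuous_parametric_primitive_of_continuous
      (μ := volume) (f := v) (a₀ := 0) hvc
    exact h.comp₂ continuous_snd continuous_fst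
  have hvswap : Continuous (fun q : ℝ × ℝ => v q.2 q.1) :=
    hvc.comp₂ continuous_snd continuous_fst
  set P : ℝ → ℝ → ℂ := fun s t => ∫ τ in (0:ℝ)..t, v s τ with hPdef
  have hPd : ∀ s t, HasDerivAt (fun t' => P s t') (v s t) t := by
    intro s t
    exact intervalIntegral.integral_hasDerivAt_right (hvi s 0 t)
      (hvcs s).stronglyMeasurable.stronglyMeasurableAtFilter (hvcs s).continuousAt
  have hHd : ∀ (s t : ℝ), HasDerivAt (fun t' => γ 0 + (s:ℂ) * (1 - γ 0) + P s t') (v s t) t :=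
    fun s t => (hPd s t).const_add _
  have hHderiv : ∀ (s t : ℝ), deriv (fun t' => γ 0 + (s:ℂ) * (1 - γ 0) + P s t') t = v s t :=
    fun s t => (hHd s t).deriv
  refine ⟨fun t s => γ 0 + (s:ℂ) * (1 - γ 0) + P s t, ?_, ?_, ?_, ?_, ?_, ?_, ?_⟩
  · beta_reduce
    apply Continuous.continuousOn
    apply Continuous.add
    · exact continuous_const.add
        ((Complex.continuous_ofReal.comp continuous_snd).mul continuous_const)
    · exact hPswap
  · intro t s hs
    beta_reduce
    have hsplit : P s (t+1) = P s t + ∫ τ in t..(t+1), v s τ := by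
      simp only [hPdef]
      rw [← intervalIntegral.integral_add_adjacent_intervals (hvi s 0 t) (hvi s t (t+1))]
    have hvp : Function.Periodic (v s) 1 := hvper s
    have heq2 : ∫ τ in t..(t+1), v s τ = ∫ τ in (0:ℝ)..1, v s τ := by
      have h := hvp.intervalIntegral_add_eq t 0
      simpa using h
    simp only [hsplit, heq2, hvint s hs, add_zero]
  · intro s hs
    beta_reduce
    rw [contDiff_one_iff_deriv]
    refine ⟨fun t => (hHd s t).differentiableAt, ?_⟩
    have heq3 : deriv (fun t => γ 0 + (s:ℂ) * (1 - γ 0) + P s t) = v s := funext (hHderiv s)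
    rw [heq3]
    exact hvcs s
  · intro t s hs
    beta_reduce
    rw [hHderiv s t]
    have h1 : v s t = (ρ s t : ℂ) * (Complex.exp ((Θ s t : ℝ) * Complex.I) - c s) := by
      simp only [hvdef, hfdef, hc'eq s hs]
      ring
    rw [h1]
    apply mul_ne_zero
    · exact Complex.ofReal_ne_zero.mpr (hρpos s hs t).ne'
    · intro hzero
      have h2 : Complex.exp ((Θ s t : ℝ) * Complex.I) = c s := sub_eq_zero.mp hzero
      have h3 : ‖Complex.exp ((Θ s t : ℝ) * Complex.I)‖ = 1 := by
        rw [Complex.norm_exp_ofReal_mul_I]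
      rw [h2] at h3
      have h4 := hclt s hs
      linarith
  · beta_reduce
    have hEq : ∀ q : ℝ × ℝ,
        deriv (fun t' => γ 0 + ((q.2:ℝ):ℂ) * (1 - γ 0) + P q.2 t') q.1 = v q.2 q.1 :=
      fun q => hHderiv q.2 q.1
    exact (hvswap.continuousOn).congr (fun q _ => hEq q)
  · intro t
    have hf0 : ∀ τ : ℝ, f 0 τ = deriv γ τ := by
      intro τ
      have e1 : ρ 0 τ = Real.exp ((w τ).re) := by simp [hρdef]
      have e2 : Θ 0 τ = (w τ).im := by simp [hΘdef]
      simp only [hfdef]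
      rw [e1, e2]
      calc (↑(Real.exp (w τ).re) : ℂ) * Complex.exp (↑((w τ).im) * Complex.I)
          = Complex.exp (↑((w τ).re)) * Complex.exp (↑((w τ).im) * Complex.I) := by
            rw [Complex.ofReal_exp]
        _ = Complex.exp (↑((w τ).re) + ↑((w τ).im) * Complex.I) := (Complex.exp_add _ _).symm
        _ = Complex.exp (w τ) := by rw [Complex.re_add_im]
        _ = deriv γ τ := hexpw τ
    have hγ10 : γ 1 = γ 0 := by
      have h := hper 0
      rwa [zero_add] at h
    have hintf0 : (∫ τ in (0:ℝ)..1, f 0 τ) = 0 := by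
      rw [intervalIntegral.integral_congr (g := deriv γ) (fun τ _ => hf0 τ)]
      rw [intervalIntegral.integral_deriv_eq_sub (fun x _ => hdiffγ x)
        (hdγc.intervalIntegrable 0 1), hγ10, sub_self]
    have hc0 : c 0 = 0 := by
      simp only [hcdef]
      rw [hintf0, zero_div]
    have hc'0 : c' 0 = 0 := by
      rw [hc'eq 0 ⟨le_refl 0, zero_le_one⟩, hc0]
    have hv0 : ∀ τ : ℝ, v 0 τ = deriv γ τ := by
      intro τ
      simp only [hvdef]
      rw [hc'0, mul_zero, sub_zero, hf0]
    have hP0 : P 0 t = γ t - γ 0 := by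
      simp only [hPdef]
      rw [intervalIntegral.integral_congr (g := deriv γ) (fun τ _ => hv0 τ)]
      rw [intervalIntegral.integral_deriv_eq_sub (fun x _ => hdiffγ x)
        (hdγc.intervalIntegrable 0 t)]
    beta_reduce
    simp only [Complex.ofReal_zero, zero_mul, add_zero, hP0]
    ring
  · intro t
    have h2πIk : (2*(Real.pi:ℂ)*Complex.I*(k:ℂ)) ≠ 0 := by
      apply mul_ne_zero h2πI
      exact_mod_cast hk
    have hf1 : ∀ τ : ℝ, f 1 τ = (2*(Real.pi:ℂ)*Complex.I*(k:ℂ))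
        * Complex.exp ((2*(Real.pi:ℂ)*Complex.I*(k:ℂ)) * (τ:ℂ)) := by
      intro τ
      have e1 : ρ 1 τ = 2*Real.pi*(σ*(k:ℝ)) := by simp [hρdef]
      have e2 : Θ 1 τ = 2*Real.pi*(k:ℝ)*τ + σ*(Real.pi/2) := by simp [hΘdef]
      have hσcase : (↑(2*Real.pi*(σ*(k:ℝ))) : ℂ)
          * Complex.exp ((↑(σ*(Real.pi/2)):ℂ) * Complex.I)
          = 2*(Real.pi:ℂ)*Complex.I*(k:ℂ) := by
        simp only [hσdef]
        split_ifs with hcase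
        · have hc : Complex.cos (↑(Real.pi/2) : ℂ) = 0 := by
            rw [← Complex.ofReal_cos, Real.cos_pi_div_two, Complex.ofReal_zero]
          have hs' : Complex.sin (↑(Real.pi/2) : ℂ) = 1 := by
            rw [← Complex.ofReal_sin, Real.sin_pi_div_two, Complex.ofReal_one]
          rw [show ((1:ℝ)*(Real.pi/2)) = Real.pi/2 from one_mul _, Complex.exp_mul_I, hc, hs']
          push_cast
          ring
        · have hc : Complex.cos (↑(-(1:ℝ)*(Real.pi/2)) : ℂ) = 0 := by
            rw [← Complex.ofReal_cos]
            norm_num [Real.cos_pi_div_two]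
          have hs' : Complex.sin (↑(-(1:ℝ)*(Real.pi/2)) : ℂ) = -1 := by
            rw [← Complex.ofReal_sin]
            norm_num [Real.sin_pi_div_two]
          rw [Complex.exp_mul_I, hc, hs']
          push_cast
          ring
      have hexparg : (↑(2*Real.pi*(k:ℝ)*τ) : ℂ) * Complex.I
          = (2*(Real.pi:ℂ)*Complex.I*(k:ℂ)) * (τ:ℂ) := by
        push_cast
        ring
      simp only [hfdef]
      rw [e1, e2, Complex.ofReal_add, add_mul, Complex.exp_add, hexparg]
      rw [show (↑(2*Real.pi*(σ*(k:ℝ))) : ℂ)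
          * (Complex.exp ((2*(Real.pi:ℂ)*Complex.I*(k:ℂ)) * (τ:ℂ))
            * Complex.exp ((↑(σ*(Real.pi/2)):ℂ) * Complex.I))
          = ((↑(2*Real.pi*(σ*(k:ℝ))) : ℂ) * Complex.exp ((↑(σ*(Real.pi/2)):ℂ) * Complex.I))
            * Complex.exp ((2*(Real.pi:ℂ)*Complex.I*(k:ℂ)) * (τ:ℂ)) from by ring]
      rw [hσcase]
    have hexpC1 : Complex.exp (2*(Real.pi:ℂ)*Complex.I*(k:ℂ)) = 1 := by
      rw [show (2*(Real.pi:ℂ)*Complex.I*(k:ℂ)) = (k:ℂ) * (2*(Real.pi:ℂ)*Complex.I)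
        from by ring]
      exact Complex.exp_int_mul_two_pi_mul_I k
    have hintf1 : (∫ τ in (0:ℝ)..1, f 1 τ) = 0 := by
      rw [intervalIntegral.integral_congr (fun τ _ => hf1 τ)]
      rw [intervalIntegral.integral_const_mul, integral_exp_mul_complex h2πIk]
      push_cast
      rw [mul_one, mul_zero, Complex.exp_zero, hexpC1, sub_self, zero_div, mul_zero]
    have hc1 : c 1 = 0 := by
      simp only [hcdef]
      rw [hintf1, zero_div]
    have hc'1 : c' 1 = 0 := by
      rw [hc'eq 1 ⟨zero_le_one, le_refl 1⟩, hc1]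
    have hv1 : ∀ τ : ℝ, v 1 τ = (2*(Real.pi:ℂ)*Complex.I*(k:ℂ))
        * Complex.exp ((2*(Real.pi:ℂ)*Complex.I*(k:ℂ)) * (τ:ℂ)) := by
      intro τ
      simp only [hvdef]
      rw [hc'1, mul_zero, sub_zero, hf1]
    have hP1 : P 1 t = Complex.exp ((2*(Real.pi:ℂ)*Complex.I*(k:ℂ)) * (t:ℂ)) - 1 := by
      simp only [hPdef]
      rw [intervalIntegral.integral_congr (fun τ _ => hv1 τ)]
      rw [intervalIntegral.integral_const_mul, integral_exp_mul_complex h2πIk]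
      push_cast
      rw [mul_zero, Complex.exp_zero, ← mul_div_assoc, mul_div_cancel_left₀ _ h2πIk]
    beta_reduce
    rw [hP1]
    push_cast
    ring
end

section
/- Let p ∈ ℂ and let γ₀, γ₁ : ℝ → ℂ be C² immersed loops avoiding p that are regularly homotopic in ℂ ∖ {p}: there is a continuous H : ℝ × [0,1] → ℂ with H(t+1, s) = H(t, s), H(t, s) ≠ p for all t, s, each H(·, s) continuously differentiable in t with ∂H/∂t(t, s) ≠ 0, the map (t, s) ↦ ∂H/∂t(t, s) continuous, H(·, 0) = γ₀ and H(·, 1) = γ₁. For j = 0, 1 define g_j(t) := Im(conj(deriv γ_j t) · (γ_j(t) − p)) and assume the set Z_j = {t ∈ [0,1) : g_j(t) = 0} is finite with deriv g_j t ≠ 0 for all t ∈ Z_j, and set N₁(p, γ_j) := ∑_{t ∈ Z_j} (− sign(Re(conj(deriv γ_j t) · (γ_j(t) − p))) · sign(deriv g_j t)). Then N₁(p, γ₀) = N₁(p, γ₁). -/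
open scoped BigOperators

open Set Complex

noncomputable section



lemma cos_int_mul_pi' (m : ℤ) : Real.cos ((m : ℝ) * Real.pi) = (-1 : ℝ) ^ m := by
  simpa using Real.cos_int_mul_pi_sub 0 m

/-- Sign of a real number near a simple zero. -/
lemma sign_near_simple_zero {g : ℝ → ℝ} {c τ : ℝ} (hd : HasDerivAt g c τ)
    (hz : g τ = 0) (hc : c ≠ 0) :
    ∃ δ > 0, (∀ t, τ - δ < t → t < τ → Real.sign (g t) = -Real.sign c) ∧
      (∀ t, τ < t → t < τ + δ → Real.sign (g t) = Real.sign c) := by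
  have hslope : Filter.Tendsto (slope g τ) (nhdsWithin τ {τ}ᶜ) (nhds c) :=
    hasDerivAt_iff_tendsto_slope.1 hd
  have h1 : ∀ᶠ t in nhdsWithin τ {τ}ᶜ, |slope g τ t - c| < |c| := by
    have := hslope (Metric.ball_mem_nhds c (abs_pos.2 hc))
    filter_upwards [this] with t ht
    simpa [Real.dist_eq] using ht
  rw [eventually_nhdsWithin_iff] at h1
  rcases Metric.eventually_nhds_iff.1 h1 with ⟨δ, hδ, hδ'⟩
  have key : ∀ t, t ≠ τ → |t - τ| < δ →
      ((0 < c → 0 < slope g τ t) ∧ (c < 0 → slope g τ t < 0)) := by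
    intro t ht hd'
    have h2 : |slope g τ t - c| < |c| := hδ' (by simpa [Real.dist_eq] using hd') ht
    have h3 := abs_lt.1 h2
    constructor
    · intro hpos; rw [abs_of_pos hpos] at h3; linarith [h3.1]
    · intro hneg; rw [abs_of_neg hneg] at h3; linarith [h3.2]
  have hg : ∀ t, t ≠ τ → g t = slope g τ t * (t - τ) := by
    intro t ht
    rw [slope_def_field, hz, sub_zero, div_mul_cancel₀ _ (sub_ne_zero.2 ht)]
  have main : ∀ t, t ≠ τ → |t - τ| < δ → ∀ s : ℝ, (t < τ → s = -1) → (τ < t → s = 1) →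
      Real.sign (g t) = s * Real.sign c := by
    intro t ht habs s hs1 hs2
    rcases lt_or_gt_of_ne hc with hneg | hpos
    · rcases lt_or_gt_of_ne ht with hlt | hgt
      · have : 0 < g t := by
          rw [hg t ht]
          exact mul_pos_of_neg_of_neg ((key t ht habs).2 hneg) (by linarith)
        rw [Real.sign_of_pos this, Real.sign_of_neg hneg, hs1 hlt]; ring
      · have : g t < 0 := by
          rw [hg t ht]
          exact mul_neg_of_neg_of_pos ((key t ht habs).2 hneg) (by linarith)
        rw [Real.sign_of_neg this, Real.sign_of_neg hneg, hs2 hgt]; ring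
    · rcases lt_or_gt_of_ne ht with hlt | hgt
      · have : g t < 0 := by
          rw [hg t ht]
          exact mul_neg_of_pos_of_neg ((key t ht habs).1 hpos) (by linarith)
        rw [Real.sign_of_neg this, Real.sign_of_pos hpos, hs1 hlt]; ring
      · have : 0 < g t := by
          rw [hg t ht]
          exact mul_pos ((key t ht habs).1 hpos) (by linarith)
        rw [Real.sign_of_pos this, Real.sign_of_pos hpos, hs2 hgt]; ring
  refine ⟨δ, hδ, fun t h1t h2t => ?_, fun t h1t h2t => ?_⟩
  · have habs : |t - τ| < δ := by rw [abs_sub_lt_iff]; constructor <;> linarith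
    have := main t (ne_of_lt h2t) habs (-1) (fun _ => rfl) (fun h => absurd h (not_lt.2 h2t.le))
    rw [this]; ring
  · have habs : |t - τ| < δ := by rw [abs_sub_lt_iff]; constructor <;> linarith
    have := main t (ne_of_gt h1t) habs 1 (fun h => absurd h (not_lt.2 h1t.le)) (fun _ => rfl)
    rw [this]; ring

/-- Sign of sine on the band `(mπ, (m+1)π)`. -/
lemma sign_sin_band (m : ℤ) {x : ℝ} (h1 : (m : ℝ) * Real.pi < x)
    (h2 : x < ((m : ℝ) + 1) * Real.pi) :
    Real.sign (Real.sin x) = (-1 : ℝ) ^ m := by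
  have hx : Real.sin x = (-1 : ℝ) ^ m * Real.sin (x - m * Real.pi) := by
    have : x = (m : ℝ) * Real.pi + (x - m * Real.pi) := by ring
    rw [this, Real.sin_add, Real.sin_int_mul_pi, cos_int_mul_pi']
    ring_nf
  have hs : 0 < Real.sin (x - m * Real.pi) := by
    apply Real.sin_pos_of_pos_of_lt_pi <;> [linarith; linarith]
  rw [hx]
  rcases Int.even_or_odd m with he | ho
  · rw [he.neg_one_zpow, one_mul, Real.sign_of_pos hs]
  · rw [Odd.neg_one_zpow ho, neg_one_mul, Real.sign_of_neg (by linarith)]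




/-- Existence of a continuous logarithm of a nonvanishing continuous function on `[c, d]`. -/
lemma exists_lift {f : ℝ → ℂ} {c d : ℝ} (hcd : c ≤ d) (hf : ContinuousOn f (Icc c d))
    (h0 : ∀ t ∈ Icc c d, f t ≠ 0) :
    ∃ L : ℝ → ℂ, ContinuousOn L (Icc c d) ∧ ∀ t ∈ Icc c d, Complex.exp (L t) = f t := by
  -- minimum of ‖f‖
  obtain ⟨t₀, ht₀, hmin'⟩ := isCompact_Icc.exists_isMinOn (nonempty_Icc.2 hcd)
    (hf.norm)
  have hmin := isMinOn_iff.1 hmin'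
  set m := ‖f t₀‖ with hm
  have hmpos : 0 < m := norm_pos_iff.2 (h0 t₀ ht₀)
  -- uniform continuity
  have hu := isCompact_Icc.uniformContinuousOn_of_continuous hf
  rcases Metric.uniformContinuousOn_iff.1 hu m hmpos with ⟨δ, hδpos, hδ⟩
  obtain ⟨n, hn⟩ := exists_nat_gt ((d - c) / δ)
  have hnpos : 0 < (n : ℝ) := lt_of_le_of_lt (div_nonneg (by linarith) hδpos.le) hn
  have hstep : (d - c) / n < δ := by
    rw [div_lt_iff₀ hnpos]
    calc d - c = (d - c) / δ * δ := by field_simp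
    _ < n * δ := by exact mul_lt_mul_of_pos_right hn hδpos
    _ = δ * n := by ring
  have hstepnn : 0 ≤ (d - c) / n := div_nonneg (by linarith) hnpos.le
  set e := (d - c) / n with he
  set x : ℕ → ℝ := fun k => c + k * e with hx
  have hxmono : Monotone x := fun i j hij => by
    simp only [hx, add_le_add_iff_left]
    exact mul_le_mul_of_nonneg_right (by exact_mod_cast hij) hstepnn
  have hxc : x 0 = c := by simp [hx]
  have hxd : x n = d := by
    simp only [hx, he]
    field_simp
    ring
  have hxmem : ∀ k, k ≤ n → x k ∈ Icc c d := by
    intro k hk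
    constructor
    · rw [← hxc]; exact hxmono (Nat.zero_le _)
    · rw [← hxd]; exact hxmono hk
  set proj : ℕ → ℝ → ℝ := fun k t => max (min t (x (k + 1))) (x k) with hproj
  have hprojmem : ∀ k, k < n → ∀ t, proj k t ∈ Icc (x k) (x (k + 1)) := by
    intro k hk t
    constructor
    · exact le_max_right _ _
    · exact max_le (min_le_right _ _) (hxmono (Nat.le_succ k))
  have hprojIcc : ∀ k, k < n → ∀ t, proj k t ∈ Icc c d := by
    intro k hk t
    have h1 := hprojmem k hk t
    exact ⟨le_trans (hxmem k hk.le).1 h1.1, le_trans h1.2 (hxmem (k+1) hk).2⟩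
  have hratio : ∀ k, k < n → ∀ t, f (proj k t) / f (x k) ∈ Metric.ball (1 : ℂ) 1 := by
    intro k hk t
    have hk' := hxmem k hk.le
    have hp' := hprojIcc k hk t
    have hdist : dist (proj k t) (x k) < δ := by
      rw [Real.dist_eq]
      have h1 := hprojmem k hk t
      have : x (k+1) - x k = e := by simp [hx]; ring
      rw [_root_.abs_of_nonneg (by linarith [h1.1])]
      have : proj k t - x k ≤ e := by
        have := h1.2
        have h2 : x (k+1) = x k + e := by simp [hx]; ring
        linarith
      exact lt_of_le_of_lt this hstep
    have hnorm : ‖f (proj k t) - f (x k)‖ < m := by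
      rw [← dist_eq_norm]
      exact hδ _ hp' _ hk' hdist
    rw [Metric.mem_ball, dist_eq_norm]
    have hfk : f (x k) ≠ 0 := h0 _ hk'
    have : f (proj k t) / f (x k) - 1 = (f (proj k t) - f (x k)) / f (x k) := by
      field_simp
    rw [this, norm_div]
    rw [div_lt_one (norm_pos_iff.2 hfk)]
    exact lt_of_lt_of_le hnorm (hmin _ hk')
  set L : ℝ → ℂ := fun t =>
    Complex.log (f c) + ∑ k ∈ Finset.range n, Complex.log (f (proj k t) / f (x k)) with hL
  refine ⟨L, ?_, ?_⟩
  · apply ContinuousOn.add continuousOn_const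
    apply continuousOn_finset_sum
    intro k hk
    rw [Finset.mem_range] at hk
    have hprojcont : Continuous (proj k) := by
      exact (continuous_id.min continuous_const).max continuous_const
    apply ContinuousOn.clog
    · apply ContinuousOn.div
      · exact hf.comp hprojcont.continuousOn (fun t _ => hprojIcc k hk t)
      · exact continuousOn_const
      · intro t _
        exact h0 _ (hxmem k hk.le)
    · intro t _
      exact Complex.ball_one_subset_slitPlane (hratio k hk t)
  · intro t ht
    have key : ∀ j, j ≤ n →
        f c * ∏ k ∈ Finset.range j, (f (proj k t) / f (x k)) = f (min t (x j)) := by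
      intro j
      induction j with
      | zero => intro _; simp [hxc, min_eq_right ht.1]
      | succ j ih =>
        intro hj
        have hj' : j ≤ n := Nat.le_of_succ_le hj
        rw [Finset.prod_range_succ, ← mul_assoc, ih hj']
        have hfxj : f (x j) ≠ 0 := h0 _ (hxmem j hj')
        rcases le_total t (x j) with hle | hge
        · have h1 : min t (x j) = t := min_eq_left hle
          have h2 : min t (x (j+1)) = t := min_eq_left (le_trans hle (hxmono (Nat.le_succ j)))
          have h3 : proj j t = x j := by
            simp only [hproj]
            rw [h2, max_eq_right hle]
          rw [h1, h2, h3, div_self hfxj, mul_one]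
        · have h1 : min t (x j) = x j := min_eq_right hge
          have h3 : proj j t = min t (x (j+1)) := by
            simp only [hproj]
            exact max_eq_left (le_min hge (hxmono (Nat.le_succ j)))
          rw [h1, h3]
          rw [mul_div_assoc']
          rw [mul_comm (f (x j)), mul_div_assoc, div_self hfxj, mul_one]
    have hkey := key n le_rfl
    rw [hxd, min_eq_left ht.2] at hkey
    simp only [hL]
    rw [Complex.exp_add, Complex.exp_sum]
    rw [Complex.exp_log (h0 c (left_mem_Icc.2 hcd))]
    have : ∀ k ∈ Finset.range n, Complex.exp (Complex.log (f (proj k t) / f (x k)))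
        = f (proj k t) / f (x k) := by
      intro k hk
      rw [Finset.mem_range] at hk
      apply Complex.exp_log
      apply div_ne_zero (h0 _ (hprojIcc k hk t)) (h0 _ (hxmem k hk.le))
    rw [Finset.prod_congr rfl this, hkey]

/-- A continuous function on an interval whose exponential is constantly 1 is constant. -/
lemma const_of_exp_eq_one {u : ℝ → ℂ} {c d : ℝ} (hu : ContinuousOn u (Icc c d))
    (h1 : ∀ t ∈ Icc c d, Complex.exp (u t) = 1) : ∀ t ∈ Icc c d, u t = u c := by
  intro t ht
  have hcd : c ≤ d := le_trans ht.1 ht.2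
  have hc : c ∈ Icc c d := left_mem_Icc.2 hcd
  have hint : ∀ s ∈ Icc c d, ∃ nn : ℤ, u s = nn * (2 * Real.pi * I) :=
    fun s hs => Complex.exp_eq_one_iff.1 (h1 s hs)
  set v : ℝ → ℝ := fun s => (u s).im / (2 * Real.pi) with hv
  have hvint : ∀ s ∈ Icc c d, ∃ nn : ℤ, v s = nn := by
    intro s hs
    obtain ⟨nn, hnn⟩ := hint s hs
    refine ⟨nn, ?_⟩
    simp only [hv, hnn]
    have : ((nn : ℂ) * (2 * Real.pi * I)).im = nn * (2 * Real.pi) := by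
      simp [Complex.mul_im]
    rw [this]
    field_simp
  have hvcont : ContinuousOn v (Icc c t) := by
    apply ContinuousOn.div_const
    exact (Complex.continuous_im.comp_continuousOn (hu.mono (Icc_subset_Icc le_rfl ht.2)))
  have hveq : v t = v c := by
    by_contra hne
    obtain ⟨nt, hnt⟩ := hvint t ht
    obtain ⟨nc, hnc⟩ := hvint c hc
    have hnne : nc ≠ nt := fun h => hne (by rw [hnt, hnc, h])
    have hmain : ∀ k : ℤ, ((k : ℝ) + 1/2) ∈ uIcc (v c) (v t) → False := by
      intro k hk
      have himg := intermediate_value_uIcc (by rwa [uIcc_of_le ht.1] : ContinuousOn v (uIcc c t)) hk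
      obtain ⟨s, hs, hvs⟩ := himg
      rw [uIcc_of_le ht.1] at hs
      obtain ⟨ns, hns⟩ := hvint s ⟨hs.1, le_trans hs.2 ht.2⟩
      rw [hns] at hvs
      have : (2 * ns : ℤ) = 2 * k + 1 := by
        have : (2 * (ns:ℝ)) = 2 * k + 1 := by rw [hvs]; ring
        exact_mod_cast this
      omega
    rcases hnne.lt_or_gt with h | h
    · apply hmain nc
      rw [mem_uIcc]
      left
      constructor
      · rw [hnc]; linarith
      · rw [hnt]
        have : (nc : ℝ) + 1 ≤ nt := by exact_mod_cast Int.add_one_le_of_lt h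
        linarith
    · apply hmain nt
      rw [mem_uIcc]
      right
      constructor
      · rw [hnt]; linarith
      · rw [hnc]
        have : (nt : ℝ) + 1 ≤ nc := by exact_mod_cast Int.add_one_le_of_lt h
        linarith
  obtain ⟨nt, hnt⟩ := hint t ht
  obtain ⟨nc, hnc⟩ := hint c hc
  have hre : (u t).re = (u c).re := by
    rw [hnt, hnc]
    simp [Complex.mul_re]
  have him : (u t).im = (u c).im := by
    have := hveq
    simp only [hv] at this
    have hpi : (2 * Real.pi) ≠ 0 := by positivity
    field_simp at this
    exact this
  exact Complex.ext hre him




lemma sign_pos_mul {p s : ℝ} (hp : 0 < p) : Real.sign (p * s) = Real.sign s := by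
  rcases lt_trichotomy s 0 with h | h | h
  · rw [Real.sign_of_neg h, Real.sign_of_neg (mul_neg_of_pos_of_neg hp h)]
  · rw [h, mul_zero]
  · rw [Real.sign_of_pos h, Real.sign_of_pos (mul_pos hp h)]

section Count

variable {f L : ℝ → ℂ} {g : ℝ → ℝ} {lo hi : ℝ}

/-- On an interval where `g = Im f` has no zero, the band index `⌊Im L / π⌋` is constant. -/
lemma band_const (hL : ContinuousOn L (Icc lo hi))
    (hfL : ∀ t ∈ Icc lo hi, Complex.exp (L t) = f t)
    (hg : ∀ t, g t = (f t).im)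
    {c d : ℝ} (hlc : lo ≤ c) (hcd : c ≤ d) (hdh : d ≤ hi)
    (hnz : ∀ t ∈ Icc c d, g t ≠ 0) :
    ⌊(L d).im / Real.pi⌋ = ⌊(L c).im / Real.pi⌋ := by
  have hsub : Icc c d ⊆ Icc lo hi := Icc_subset_Icc hlc hdh
  set u : ℝ → ℝ := fun t => (L t).im / Real.pi with hu
  have hucont : ContinuousOn u (Icc c d) :=
    ((Complex.continuous_im.comp_continuousOn (hL.mono hsub)).div_const _)
  have hunint : ∀ t ∈ Icc c d, ∀ k : ℤ, u t ≠ k := by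
    intro t ht k hk
    apply hnz t ht
    rw [hg, ← hfL t (hsub ht), Complex.exp_im]
    have : (L t).im = k * Real.pi := by
      have hπ : Real.pi ≠ 0 := Real.pi_ne_zero
      have hk' : (L t).im / Real.pi = k := hk
      rw [div_eq_iff hπ] at hk'
      linarith [hk']
    rw [this, Real.sin_int_mul_pi, mul_zero]
  have hmain : ∀ k : ℤ, (k : ℝ) ∈ uIcc (u c) (u d) → False := by
    intro k hk
    have hcc : c ∈ Icc c d := left_mem_Icc.2 hcd
    have himg := intermediate_value_uIcc
      (by rwa [uIcc_of_le hcd] : ContinuousOn u (uIcc c d)) hk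
    obtain ⟨s, hs, hus⟩ := himg
    rw [uIcc_of_le hcd] at hs
    exact hunint s hs k hus
  by_contra hne
  rcases Ne.lt_or_gt hne with h | h
  · apply hmain ⌊u c⌋
    rw [mem_uIcc]
    right
    refine ⟨le_of_lt ?_, Int.floor_le _⟩
    calc (u d) < ⌊u d⌋ + 1 := Int.lt_floor_add_one _
      _ ≤ ⌊u c⌋ := by exact_mod_cast Int.add_one_le_of_lt h
  · apply hmain ⌊u d⌋
    rw [mem_uIcc]
    left
    refine ⟨le_of_lt ?_, Int.floor_le _⟩
    calc (u c) < ⌊u c⌋ + 1 := Int.lt_floor_add_one _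
      _ ≤ ⌊u d⌋ := by exact_mod_cast Int.add_one_le_of_lt h

/-- Crossing lemma: a single simple zero of `g` in `(c, d)` changes the band index by
`sign(Re f τ) * sign(g' τ)`. -/
lemma band_crossing (hL : ContinuousOn L (Icc lo hi))
    (hfL : ∀ t ∈ Icc lo hi, Complex.exp (L t) = f t)
    (hg : ∀ t, g t = (f t).im)
    {c τ d : ℝ} (hlc : lo ≤ c) (hdh : d ≤ hi) (hcτ : c < τ) (hτd : τ < d)
    (hnz : ∀ t ∈ Icc c d, t ≠ τ → g t ≠ 0) (hτz : g τ = 0)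
    (hder : HasDerivAt g (deriv g τ) τ) (hdne : deriv g τ ≠ 0) :
    ((⌊(L d).im / Real.pi⌋ - ⌊(L c).im / Real.pi⌋ : ℤ) : ℝ)
      = Real.sign ((f τ).re) * Real.sign (deriv g τ) := by
  have hsub : Icc c d ⊆ Icc lo hi := Icc_subset_Icc hlc hdh
  have hτmem : τ ∈ Icc c d := ⟨hcτ.le, hτd.le⟩
  set θ : ℝ → ℝ := fun t => (L t).im with hθ
  -- g t = e^(Re L t) * sin (θ t) on [c,d]
  have hgsin : ∀ t ∈ Icc c d, g t = Real.exp ((L t).re) * Real.sin (θ t) := by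
    intro t ht
    rw [hg, ← hfL t (hsub ht), Complex.exp_im]
  have hsigng : ∀ t ∈ Icc c d, Real.sign (g t) = Real.sign (Real.sin (θ t)) := by
    intro t ht
    rw [hgsin t ht, sign_pos_mul (Real.exp_pos _)]
  -- θ τ = q π
  have hsinτ : Real.sin (θ τ) = 0 := by
    have h := hgsin τ hτmem
    rw [hτz] at h
    rcases mul_eq_zero.1 h.symm with h' | h'
    · exact absurd h' (ne_of_gt (Real.exp_pos _))
    · exact h'
  obtain ⟨q, hq⟩ : ∃ q : ℤ, (q : ℝ) * Real.pi = θ τ := Real.sin_eq_zero_iff.1 hsinτ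
  -- continuity of θ at τ within [c,d]
  have hθcont : ContinuousWithinAt θ (Icc c d) τ :=
    (Complex.continuous_im.comp_continuousOn (hL.mono hsub)) τ hτmem
  rw [Metric.continuousWithinAt_iff] at hθcont
  obtain ⟨δ₁, hδ₁pos, hδ₁⟩ := hθcont (Real.pi / 2) (by positivity)
  obtain ⟨δ₂, hδ₂pos, hsgnL, hsgnR⟩ := sign_near_simple_zero hder hτz hdne
  set ε := min δ₁ δ₂ with hε
  have hεpos : 0 < ε := lt_min hδ₁pos hδ₂pos
  -- left sample point
  set t₁ := max c (τ - ε / 2) + (τ - max c (τ - ε / 2)) / 2 with ht₁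
  have hlmax : max c (τ - ε / 2) < τ := max_lt hcτ (by linarith)
  have hlmax' : c ≤ max c (τ - ε / 2) := le_max_left _ _
  have hlmax'' : τ - ε / 2 ≤ max c (τ - ε / 2) := le_max_right _ _
  have ht₁mem : t₁ ∈ Icc c d := by
    constructor
    · simp only [ht₁]; linarith
    · simp only [ht₁]; linarith
  have ht₁lt : t₁ < τ := by simp only [ht₁]; linarith
  have ht₁close : |t₁ - τ| < ε := by
    rw [abs_sub_lt_iff]
    constructor
    · simp only [ht₁]; linarith
    · simp only [ht₁]; linarith
  -- right sample point
  set t₂ := min d (τ + ε / 2) - (min d (τ + ε / 2) - τ) / 2 with ht₂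
  have hrmin : τ < min d (τ + ε / 2) := lt_min hτd (by linarith)
  have hrmin' : min d (τ + ε / 2) ≤ d := min_le_left _ _
  have hrmin'' : min d (τ + ε / 2) ≤ τ + ε / 2 := min_le_right _ _
  have ht₂mem : t₂ ∈ Icc c d := by
    constructor
    · simp only [ht₂]; linarith
    · simp only [ht₂]; linarith
  have ht₂gt : τ < t₂ := by simp only [ht₂]; linarith
  have ht₂close : |t₂ - τ| < ε := by
    rw [abs_sub_lt_iff]
    constructor
    · simp only [ht₂]; linarith
    · simp only [ht₂]; linarith
  -- samples are close in θ
  have hθt₁ : |θ t₁ - θ τ| < Real.pi / 2 := by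
    have := hδ₁ ht₁mem (show dist t₁ τ < δ₁ by
      rw [Real.dist_eq]; exact lt_of_lt_of_le ht₁close (min_le_left _ _))
    rwa [Real.dist_eq] at this
  have hθt₂ : |θ t₂ - θ τ| < Real.pi / 2 := by
    have := hδ₁ ht₂mem (show dist t₂ τ < δ₁ by
      rw [Real.dist_eq]; exact lt_of_lt_of_le ht₂close (min_le_left _ _))
    rwa [Real.dist_eq] at this
  have hsg₁ : Real.sign (g t₁) = -Real.sign (deriv g τ) := by
    apply hsgnL t₁ _ ht₁lt
    linarith [lt_of_lt_of_le (abs_sub_lt_iff.1 ht₁close).2 (min_le_right δ₁ δ₂)]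
  have hsg₂ : Real.sign (g t₂) = Real.sign (deriv g τ) := by
    apply hsgnR t₂ ht₂gt
    linarith [lt_of_lt_of_le (abs_sub_lt_iff.1 ht₂close).1 (min_le_right δ₁ δ₂)]
  have hπ := Real.pi_pos
  have hnzint : ∀ t ∈ Icc c d, t ≠ τ → ∀ k : ℤ, θ t ≠ (k : ℝ) * Real.pi := by
    intro t ht htτ k hk
    apply hnz t ht htτ
    rw [hgsin t ht, hk, Real.sin_int_mul_pi, mul_zero]
  -- band location of a sample point
  have hband : ∀ t, t ∈ Icc c d → t ≠ τ → |θ t - θ τ| < Real.pi / 2 →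
      (⌊θ t / Real.pi⌋ = q - 1 ∨ ⌊θ t / Real.pi⌋ = q) ∧
      ((⌊θ t / Real.pi⌋ : ℝ) * Real.pi < θ t ∧ θ t < ((⌊θ t / Real.pi⌋ : ℝ) + 1) * Real.pi) := by
    intro t ht htτ hclose
    have h1 : (q : ℝ) * Real.pi - Real.pi / 2 < θ t ∧ θ t < (q : ℝ) * Real.pi + Real.pi / 2 := by
      rw [← hq] at hclose
      rw [abs_sub_lt_iff] at hclose
      constructor <;> linarith [hclose.1, hclose.2]
    have hub : θ t / Real.pi < (q : ℝ) + 1 := by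
      rw [div_lt_iff₀ hπ]; nlinarith [h1.2]
    have hlb : (q : ℝ) - 1 < θ t / Real.pi := by
      rw [lt_div_iff₀ hπ]; nlinarith [h1.1]
    have h2 : q - 1 ≤ ⌊θ t / Real.pi⌋ := by
      apply Int.le_floor.2; push_cast; exact hlb.le
    have h3 : ⌊θ t / Real.pi⌋ ≤ q := by
      have := Int.floor_lt.2 (show θ t / Real.pi < ((q + 1 : ℤ) : ℝ) by push_cast; exact hub)
      omega
    refine ⟨by omega, ?_, ?_⟩
    · have h4 : (⌊θ t / Real.pi⌋ : ℝ) ≤ θ t / Real.pi := Int.floor_le _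
      have h5 : (⌊θ t / Real.pi⌋ : ℝ) ≠ θ t / Real.pi := by
        intro h
        apply hnzint t ht htτ ⌊θ t / Real.pi⌋
        rw [h]; field_simp
      have h6 : (⌊θ t / Real.pi⌋ : ℝ) < θ t / Real.pi := lt_of_le_of_ne h4 h5
      calc (⌊θ t / Real.pi⌋ : ℝ) * Real.pi < (θ t / Real.pi) * Real.pi :=
            mul_lt_mul_of_pos_right h6 hπ
        _ = θ t := by field_simp
    · have h4 : θ t / Real.pi < (⌊θ t / Real.pi⌋ : ℝ) + 1 := Int.lt_floor_add_one _
      calc θ t = (θ t / Real.pi) * Real.pi := by field_simp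
        _ < ((⌊θ t / Real.pi⌋ : ℝ) + 1) * Real.pi := mul_lt_mul_of_pos_right h4 hπ
  -- band indices of the two samples
  obtain ⟨hm₁mem, hm₁lo, hm₁hi⟩ :=
    hband t₁ ht₁mem (ne_of_lt ht₁lt) hθt₁
  obtain ⟨hm₂mem, hm₂lo, hm₂hi⟩ :=
    hband t₂ ht₂mem (ne_of_gt ht₂gt) hθt₂
  set m₁ : ℤ := ⌊θ t₁ / Real.pi⌋ with hm₁def
  set m₂ : ℤ := ⌊θ t₂ / Real.pi⌋ with hm₂def
  -- signs from bands
  have hsin₁ : Real.sign (Real.sin (θ t₁)) = (-1 : ℝ) ^ m₁ := by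
    apply sign_sin_band m₁ hm₁lo
    convert hm₁hi using 2
  have hsin₂ : Real.sign (Real.sin (θ t₂)) = (-1 : ℝ) ^ m₂ := by
    apply sign_sin_band m₂ hm₂lo
    convert hm₂hi using 2
  have hpar₁ : ((-1 : ℝ) ^ m₁) = -Real.sign (deriv g τ) := by
    rw [← hsin₁, ← hsigng t₁ ht₁mem, hsg₁]
  have hpar₂ : ((-1 : ℝ) ^ m₂) = Real.sign (deriv g τ) := by
    rw [← hsin₂, ← hsigng t₂ ht₂mem, hsg₂]
  -- band index at endpoints
  have hbc : ⌊(L c).im / Real.pi⌋ = m₁ := by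
    have := band_const hL hfL hg hlc (ht₁mem.1) (le_trans ht₁mem.2 hdh)
      (fun t ht' => hnz t ⟨ht'.1, le_trans ht'.2 ht₁mem.2⟩
        (ne_of_lt (lt_of_le_of_lt ht'.2 ht₁lt)))
    exact this.symm
  have hbd : ⌊(L d).im / Real.pi⌋ = m₂ := by
    have := band_const hL hfL hg (le_trans hlc ht₂mem.1) (ht₂mem.2) hdh
      (fun t ht' => hnz t ⟨le_trans ht₂mem.1 ht'.1, ht'.2⟩
        (ne_of_gt (lt_of_lt_of_le ht₂gt ht'.1)))
    exact this
  -- sign of Re f τ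
  have hre : (f τ).re = Real.exp ((L τ).re) * ((-1 : ℝ) ^ q) := by
    rw [← hfL τ (hsub hτmem), Complex.exp_re]
    congr 1
    rw [show (L τ).im = θ τ from rfl, ← hq, cos_int_mul_pi']
  have hsignre : Real.sign ((f τ).re) = (-1 : ℝ) ^ q := by
    rw [hre, sign_pos_mul (Real.exp_pos _)]
    rcases Int.even_or_odd q with he | ho
    · rw [he.neg_one_zpow, Real.sign_one]
    · rw [Odd.neg_one_zpow ho]
      rw [show ((-1 : ℝ)) = -(1:ℝ) from rfl, Real.sign_neg, Real.sign_one]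
  set s := Real.sign (deriv g τ) with hs
  have hsval : s = -1 ∨ s = 1 := Real.sign_apply_eq_of_ne_zero _ hdne
  rw [hbc, hbd, hsignre]
  rcases hm₁mem with h1 | h1 <;> rcases hm₂mem with h2 | h2
  · exfalso
    rw [h1] at hpar₁; rw [h2] at hpar₂
    rw [hpar₂] at hpar₁
    rcases hsval with h | h <;> rw [h] at hpar₁ <;> norm_num at hpar₁
  · rw [h1, h2]
    rw [h2] at hpar₂
    push_cast
    rw [← hpar₂]
    have hsq : (-1:ℝ)^q * (-1:ℝ)^q = 1 := by
      rw [← mul_zpow]; norm_num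
    rw [hsq]; ring
  · rw [h1, h2]
    rw [h1] at hpar₁
    push_cast
    have : (-1 : ℝ) ^ q = -s := hpar₁
    rw [this]
    rcases hsval with h' | h' <;> rw [h'] <;> norm_num
  · exfalso
    rw [h1] at hpar₁; rw [h2] at hpar₂
    rw [hpar₂] at hpar₁
    rcases hsval with h | h <;> rw [h] at hpar₁ <;> norm_num at hpar₁

/-- Main counting lemma: the signed count of zeros of `g = Im f` in `(c,d)` equals the
difference of band indices. -/
lemma count_interval (hL : ContinuousOn L (Icc lo hi))
    (hfL : ∀ t ∈ Icc lo hi, Complex.exp (L t) = f t) (hg : ∀ t, g t = (f t).im)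
    (hder : ∀ t, HasDerivAt g (deriv g t) t) :
    ∀ (n : ℕ) (Z : Finset ℝ) (c d : ℝ), Z.card = n → lo ≤ c → c < d → d ≤ hi →
    (∀ t ∈ Ioo c d, (g t = 0 ↔ t ∈ Z)) → (∀ t ∈ Z, t ∈ Ioo c d) →
    (∀ t ∈ Z, deriv g t ≠ 0) → g c ≠ 0 → g d ≠ 0 →
    ∑ t ∈ Z, Real.sign ((f t).re) * Real.sign (deriv g t)
      = ((⌊(L d).im / Real.pi⌋ - ⌊(L c).im / Real.pi⌋ : ℤ) : ℝ) := by
  intro n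
  induction n with
  | zero =>
    intro Z c d hcard hlc hcd hdh hiff hmem hsimp hgc hgd
    have hZ : Z = ∅ := Finset.card_eq_zero.1 hcard
    subst hZ
    rw [Finset.sum_empty]
    have hnz : ∀ t ∈ Icc c d, g t ≠ 0 := by
      intro t ht
      rcases eq_or_lt_of_le ht.1 with h | h
      · rwa [← h]
      · rcases eq_or_lt_of_le ht.2 with h' | h'
        · rwa [h']
        · intro hzero
          exact absurd ((hiff t ⟨h, h'⟩).1 hzero) (Finset.notMem_empty t)
    rw [band_const hL hfL hg hlc hcd.le hdh hnz]
    simp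
  | succ n ih =>
    intro Z c d hcard hlc hcd hdh hiff hmem hsimp hgc hgd
    have hne : Z.Nonempty := Finset.card_pos.1 (by omega)
    set τ := Z.max' hne with hτ
    have hτZ : τ ∈ Z := Z.max'_mem hne
    have hτIoo : τ ∈ Ioo c d := hmem τ hτZ
    set Z' := Z.erase τ with hZ'
    have hcard' : Z'.card = n := by
      rw [hZ', Finset.card_erase_of_mem hτZ, hcard]; omega
    have hZ'lt : ∀ z ∈ Z', z < τ := by
      intro z hz
      have h1 := Finset.le_max' Z z (Finset.mem_of_mem_erase hz)
      exact lt_of_le_of_ne h1 (Finset.ne_of_mem_erase hz)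
    set e := (insert c Z').max' (Finset.insert_nonempty c Z') with he
    have hece : c ≤ e := Finset.le_max' _ c (Finset.mem_insert_self c Z')
    have heτ : e < τ := by
      apply Finset.max'_lt_iff _ _ |>.2
      intro y hy
      rcases Finset.mem_insert.1 hy with h | h
      · rw [h]; exact hτIoo.1
      · exact hZ'lt y h
    have hZ'le : ∀ z ∈ Z', z ≤ e := fun z hz =>
      Finset.le_max' _ z (Finset.mem_insert_of_mem hz)
    set d' := (e + τ) / 2 with hd'
    have hed' : e < d' := by simp only [hd']; linarith
    have hd'τ : d' < τ := by simp only [hd']; linarith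
    have hcd' : c < d' := lt_of_le_of_lt hece hed'
    have hd'd : d' < d := lt_trans hd'τ hτIoo.2
    have hgd' : g d' ≠ 0 := by
      intro hzero
      have hd'Z : d' ∈ Z := (hiff d' ⟨hcd', hd'd⟩).1 hzero
      have : d' ∈ Z' := Finset.mem_erase.2 ⟨ne_of_lt hd'τ, hd'Z⟩
      exact absurd (hZ'le d' this) (not_le.2 hed')
    -- IH on [c, d']
    have hIH := ih Z' c d' hcard' hlc hcd' (le_trans hd'd.le hdh)
      (fun t ht => by
        rw [Finset.mem_erase]
        constructor
        · intro hzero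
          exact ⟨ne_of_lt (lt_trans ht.2 hd'τ), (hiff t ⟨ht.1, lt_trans ht.2 hd'd⟩).1 hzero⟩
        · intro htZ'
          exact (hiff t ⟨ht.1, lt_trans ht.2 hd'd⟩).2 htZ'.2)
      (fun t ht => ⟨(hmem t (Finset.mem_of_mem_erase ht)).1,
        lt_of_le_of_lt (hZ'le t ht) hed'⟩)
      (fun t ht => hsimp t (Finset.mem_of_mem_erase ht)) hgc hgd'
    -- crossing on [d', d]
    have hcross := band_crossing hL hfL hg (le_trans hlc hcd'.le) hdh hd'τ hτIoo.2
      (fun t ht htτ => by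
        rcases eq_or_lt_of_le ht.1 with h | h
        · rwa [← h]
        · rcases eq_or_lt_of_le ht.2 with h' | h'
          · rwa [h']
          · intro hzero
            have htZ : t ∈ Z := (hiff t ⟨lt_trans hcd' h, h'⟩).1 hzero
            have : t ∈ Z' := Finset.mem_erase.2 ⟨htτ, htZ⟩
            exact absurd (hZ'le t this) (not_le.2 (lt_trans hed' h)))
      (by
        have := (hiff τ hτIoo).2 hτZ
        exact this)
      (hder τ) (hsimp τ hτZ)
    -- combine
    rw [← Finset.add_sum_erase Z _ hτZ, ← hZ', hIH, ← hcross]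
    push_cast
    ring

end Count

section Wind

/-- Periodicity of the derivative of a periodic function. -/
lemma deriv_periodic {E : Type*} [NormedAddCommGroup E] [NormedSpace ℝ E]
    {φ : ℝ → E} (hper : ∀ t, φ (t + 1) = φ t) (t : ℝ) : deriv φ (t + 1) = deriv φ t := by
  have h := deriv_comp_add_const (f := φ) (a := 1) (x := t)
  have heq : (fun x => φ (x + 1)) = φ := funext hper
  rw [heq] at h
  exact h.symm

/-- The winding integer of a nonvanishing `1`-periodic function, computed from any
continuous logarithm on `[-1, 2]`. -/
lemma wind_exists {f : ℝ → ℂ} (hf : ContinuousOn f (Icc (-1) 2))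
    (h0 : ∀ t ∈ Icc (-1 : ℝ) 2, f t ≠ 0) (hper : ∀ t, f (t + 1) = f t) :
    ∃ n : ℤ, ∀ L : ℝ → ℂ, ContinuousOn L (Icc (-1) 2) →
      (∀ t ∈ Icc (-1 : ℝ) 2, Complex.exp (L t) = f t) →
      ∀ t ∈ Icc (-1 : ℝ) 1, L (t + 1) - L t = (n : ℂ) * (2 * Real.pi * I) := by
  obtain ⟨L₀, hL₀cont, hL₀⟩ := exists_lift (by norm_num) hf h0
  set u : ℝ → ℂ := fun t => L₀ (t + 1) - L₀ t with hu
  have hmemshift : ∀ t ∈ Icc (-1 : ℝ) 1, t + 1 ∈ Icc (-1 : ℝ) 2 := by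
    intro t ht; constructor <;> [linarith [ht.1]; linarith [ht.2]]
  have hmem : ∀ t ∈ Icc (-1 : ℝ) 1, t ∈ Icc (-1 : ℝ) 2 := by
    intro t ht; constructor <;> [linarith [ht.1]; linarith [ht.2]]
  have hucont : ContinuousOn u (Icc (-1) 1) := by
    apply ContinuousOn.sub
    · exact hL₀cont.comp (continuous_id.add continuous_const).continuousOn hmemshift
    · exact hL₀cont.mono (fun t ht => hmem t ht)
  have huexp : ∀ t ∈ Icc (-1 : ℝ) 1, Complex.exp (u t) = 1 := by
    intro t ht
    rw [hu]
    rw [Complex.exp_sub, hL₀ _ (hmemshift t ht), hL₀ _ (hmem t ht), hper t,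
      div_self (h0 t (hmem t ht))]
  have huconst := const_of_exp_eq_one hucont huexp
  obtain ⟨n, hn⟩ := Complex.exp_eq_one_iff.1 (huexp (-1) (by norm_num))
  refine ⟨n, ?_⟩
  intro L hLcont hL t ht
  -- L and L₀ differ by a constant
  set D : ℝ → ℂ := fun t => L t - L₀ t with hD
  have hDexp : ∀ t' ∈ Icc (-1 : ℝ) 2, Complex.exp (D t') = 1 := by
    intro t' ht'
    rw [hD, Complex.exp_sub, hL t' ht', hL₀ t' ht', div_self (h0 t' ht')]
  have hDconst := const_of_exp_eq_one (hLcont.sub hL₀cont) hDexp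
  have h1 : L (t + 1) - L t = u t := by
    have e1 := hDconst (t + 1) (hmemshift t ht)
    have e2 := hDconst t (hmem t ht)
    simp only [Pi.sub_apply] at e1 e2
    simp only [hu]
    have : L (t+1) - L₀ (t+1) = L t - L₀ t := by rw [e1, e2]
    linear_combination this
  rw [h1, huconst t ht, ← hn]

/-- Two uniformly close nonvanishing periodic functions have the same winding integer. -/
lemma wind_congr {f₁ f₂ : ℝ → ℂ} {n₁ n₂ : ℤ}
    (hf₁ : ContinuousOn f₁ (Icc (-1) 2)) (h0₁ : ∀ t ∈ Icc (-1 : ℝ) 2, f₁ t ≠ 0)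
    (hf₂ : ContinuousOn f₂ (Icc (-1) 2))
    (hper₁ : ∀ t, f₁ (t + 1) = f₁ t) (hper₂ : ∀ t, f₂ (t + 1) = f₂ t)
    (hclose : ∀ t ∈ Icc (-1 : ℝ) 2, ‖f₂ t - f₁ t‖ < ‖f₁ t‖)
    (hn₁ : ∀ L : ℝ → ℂ, ContinuousOn L (Icc (-1) 2) →
      (∀ t ∈ Icc (-1 : ℝ) 2, Complex.exp (L t) = f₁ t) →
      ∀ t ∈ Icc (-1 : ℝ) 1, L (t + 1) - L t = (n₁ : ℂ) * (2 * Real.pi * I))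
    (hn₂ : ∀ L : ℝ → ℂ, ContinuousOn L (Icc (-1) 2) →
      (∀ t ∈ Icc (-1 : ℝ) 2, Complex.exp (L t) = f₂ t) →
      ∀ t ∈ Icc (-1 : ℝ) 1, L (t + 1) - L t = (n₂ : ℂ) * (2 * Real.pi * I)) :
    n₁ = n₂ := by
  obtain ⟨L₁, hL₁cont, hL₁⟩ := exists_lift (by norm_num) hf₁ h0₁
  set r : ℝ → ℂ := fun t => f₂ t / f₁ t with hr
  have hrball : ∀ t ∈ Icc (-1 : ℝ) 2, r t ∈ Metric.ball (1 : ℂ) 1 := by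
    intro t ht
    rw [Metric.mem_ball, dist_eq_norm, hr]
    simp only
    rw [div_sub_one (h0₁ t ht), norm_div, div_lt_one (norm_pos_iff.2 (h0₁ t ht))]
    exact hclose t ht
  have hrne : ∀ t ∈ Icc (-1 : ℝ) 2, r t ≠ 0 := by
    intro t ht h
    have := hrball t ht
    rw [h, Metric.mem_ball, dist_eq_norm] at this
    norm_num at this
  have hrcont : ContinuousOn r (Icc (-1) 2) := hf₂.div hf₁ h0₁
  have hrper : ∀ t, t ∈ Icc (-1 : ℝ) 1 → r (t + 1) = r t := by
    intro t _
    simp only [hr, hper₁ t, hper₂ t]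
  set L₂ : ℝ → ℂ := fun t => L₁ t + Complex.log (r t) with hL₂
  have hL₂cont : ContinuousOn L₂ (Icc (-1) 2) := by
    apply hL₁cont.add
    exact hrcont.clog (fun t ht => Complex.ball_one_subset_slitPlane (hrball t ht))
  have hL₂lift : ∀ t ∈ Icc (-1 : ℝ) 2, Complex.exp (L₂ t) = f₂ t := by
    intro t ht
    rw [hL₂]
    simp only
    rw [Complex.exp_add, hL₁ t ht, Complex.exp_log (hrne t ht), hr]
    simp only
    rw [mul_div_assoc', mul_comm, mul_div_assoc, div_self (h0₁ t ht), mul_one]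
  have h0' : (0 : ℝ) ∈ Icc (-1 : ℝ) 1 := by norm_num
  have e₁ := hn₁ L₁ hL₁cont hL₁ 0 h0'
  have e₂ := hn₂ L₂ hL₂cont hL₂lift 0 h0'
  rw [hL₂] at e₂
  simp only at e₂
  rw [hrper 0 h0'] at e₂
  have : (n₁ : ℂ) * (2 * Real.pi * I) = (n₂ : ℂ) * (2 * Real.pi * I) := by
    rw [← e₁, ← e₂]; ring
  have h2πI : (2 * (Real.pi : ℂ) * I) ≠ 0 := by
    simp [Real.pi_ne_zero, Complex.I_ne_zero]
  have := mul_right_cancel₀ h2πI this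
  exact_mod_cast this

end Wind


section Assemble

/-- An integer-valued continuous function on an interval is constant. -/
lemma intvalued_const {v : ℝ → ℝ} {c d : ℝ} (hcd : c ≤ d)
    (hv : ContinuousOn v (Icc c d)) (hint : ∀ s ∈ Icc c d, ∃ k : ℤ, v s = k) :
    v d = v c := by
  by_contra hne
  obtain ⟨nd, hnd⟩ := hint d (right_mem_Icc.2 hcd)
  obtain ⟨nc, hnc⟩ := hint c (left_mem_Icc.2 hcd)
  have hnne : nc ≠ nd := fun h => hne (by rw [hnd, hnc, h])
  have hmain : ∀ k : ℤ, ((k : ℝ) + 1/2) ∈ uIcc (v c) (v d) → False := by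
    intro k hk
    have himg := intermediate_value_uIcc (by rwa [uIcc_of_le hcd] : ContinuousOn v (uIcc c d)) hk
    obtain ⟨s, hs, hvs⟩ := himg
    rw [uIcc_of_le hcd] at hs
    obtain ⟨ns, hns⟩ := hint s hs
    rw [hns] at hvs
    have : (2 * ns : ℤ) = 2 * k + 1 := by
      have : (2 * (ns : ℝ)) = 2 * k + 1 := by rw [hvs]; ring
      exact_mod_cast this
    omega
  rcases hnne.lt_or_gt with h | h
  · apply hmain nc
    rw [mem_uIcc]
    left
    constructor
    · rw [hnc]; linarith
    · rw [hnd]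
      have : (nc : ℝ) + 1 ≤ nd := by exact_mod_cast Int.add_one_le_of_lt h
      linarith
  · apply hmain nd
    rw [mem_uIcc]
    right
    constructor
    · rw [hnd]; linarith
    · rw [hnc]
      have : (nd : ℝ) + 1 ≤ nc := by exact_mod_cast Int.add_one_le_of_lt h
      linarith

/-- Per-loop computation: the signed count of tangency zeros over one period equals twice
the winding integer of `t ↦ conj (γ' t) * (γ t - p)`. -/
lemma loop_count (p : ℂ) (γ : ℝ → ℂ) (hγ : ContDiff ℝ 2 γ)
    (hper : ∀ t, γ (t + 1) = γ t) (himm : ∀ t, deriv γ t ≠ 0) (hp : ∀ t, γ t ≠ p)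
    (g : ℝ → ℝ) (hg : g = fun t => (star (deriv γ t) * (γ t - p)).im)
    (hZ : {t ∈ Set.Ico (0:ℝ) 1 | g t = 0}.Finite)
    (hreg : ∀ t ∈ {t ∈ Set.Ico (0:ℝ) 1 | g t = 0}, deriv g t ≠ 0)
    (L : ℝ → ℂ) (hLcont : ContinuousOn L (Icc (-1) 2))
    (hlift : ∀ t ∈ Icc (-1:ℝ) 2, Complex.exp (L t) = star (deriv γ t) * (γ t - p))
    (n : ℤ) (hn : ∀ t ∈ Icc (-1:ℝ) 1, L (t + 1) - L t = (n : ℂ) * (2 * Real.pi * I)) :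
    ∑ t ∈ hZ.toFinset,
        -Real.sign ((star (deriv γ t) * (γ t - p)).re) * Real.sign (deriv g t)
      = -(2 * (n : ℝ)) := by
  set f : ℝ → ℂ := fun t => star (deriv γ t) * (γ t - p) with hf
  -- smoothness
  have hγ' : ContDiff ℝ (1 + 1) γ := by
    rw [one_add_one_eq_two]; exact hγ
  have hd1 : ContDiff ℝ 1 (deriv γ) := (contDiff_succ_iff_deriv.mp hγ').2.2
  have hfC1 : ContDiff ℝ 1 f := by
    apply ContDiff.mul
    · exact Complex.conjCLE.contDiff.comp hd1
    · exact (hγ.of_le (by norm_num)).sub contDiff_const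
  have hgC1 : ContDiff ℝ 1 g := by
    rw [hg]
    exact Complex.imCLM.contDiff.comp hfC1
  have hgder : ∀ t, HasDerivAt g (deriv g t) t :=
    fun t => ((hgC1.differentiable one_ne_zero) t).hasDerivAt
  -- periodicity
  have hdper : ∀ t, deriv γ (t + 1) = deriv γ t := deriv_periodic hper
  have hfper : ∀ t, f (t + 1) = f t := by
    intro t; simp only [hf, hdper t, hper t]
  have hgper : ∀ t, g (t + 1) = g t := by
    intro t; rw [hg]; simp only [hfper t]
    rw [show star (deriv γ (t+1)) * (γ (t+1) - p) = star (deriv γ t) * (γ t - p) by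
      rw [hdper t, hper t]]
  have hgdper : ∀ t, deriv g (t + 1) = deriv g t := deriv_periodic hgper
  -- choose a base point avoiding the zeros
  have hIooInf : (Ioo (0:ℝ) 1).Infinite := Set.Ioo_infinite (by norm_num)
  obtain ⟨a, ha⟩ := (hIooInf.diff hZ).nonempty
  have haIoo : a ∈ Ioo (0:ℝ) 1 := ha.1
  have hga : g a ≠ 0 := fun h => ha.2 ⟨⟨haIoo.1.le, haIoo.2⟩, h⟩
  have hga1 : g (a + 1) ≠ 0 := by rw [hgper a]; exact hga
  -- the zero set and its shifted version
  set Z : Finset ℝ := hZ.toFinset with hZdef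
  have hZmem : ∀ t, t ∈ Z ↔ t ∈ Ico (0:ℝ) 1 ∧ g t = 0 := by
    intro t
    rw [hZdef, Set.Finite.mem_toFinset]
    rfl
  set A : Finset ℝ := Z.filter (fun t => a < t) with hA
  set B : Finset ℝ := Z.filter (fun t => t < a) with hB
  set Zs : Finset ℝ := A ∪ B.image (fun t => t + 1) with hZs
  -- characterization of Zs
  have hZsmem : ∀ t, t ∈ Zs ↔ t ∈ Ioo a (a + 1) ∧ g t = 0 := by
    intro t
    rw [hZs, Finset.mem_union]
    constructor
    · rintro (h | h)
      · rw [hA, Finset.mem_filter] at h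
        obtain ⟨hz, hat⟩ := h
        rw [hZmem] at hz
        exact ⟨⟨hat, by linarith [hz.1.2, haIoo.1]⟩, hz.2⟩
      · rw [Finset.mem_image] at h
        obtain ⟨z, hzB, hzt⟩ := h
        rw [hB, Finset.mem_filter] at hzB
        obtain ⟨hz, hza⟩ := hzB
        rw [hZmem] at hz
        subst hzt
        refine ⟨⟨by linarith [hz.1.1, haIoo.2], by linarith [hza]⟩, ?_⟩
        rw [hgper z]; exact hz.2
    · rintro ⟨⟨h1, h2⟩, h3⟩
      rcases lt_or_ge t 1 with hlt | hge
      · left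
        rw [hA, Finset.mem_filter, hZmem]
        exact ⟨⟨⟨by linarith [haIoo.1], hlt⟩, h3⟩, h1⟩
      · right
        rw [Finset.mem_image]
        refine ⟨t - 1, ?_, by ring⟩
        rw [hB, Finset.mem_filter, hZmem]
        have hgz : g (t - 1) = 0 := by
          have := hgper (t - 1)
          rw [sub_add_cancel] at this
          rw [← this]; exact h3
        exact ⟨⟨⟨by linarith, by linarith [haIoo.2]⟩, hgz⟩, by linarith⟩
  have hZssub : ∀ t ∈ Zs, t ∈ Ioo a (a + 1) := fun t ht => ((hZsmem t).1 ht).1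
  have hZssimp : ∀ t ∈ Zs, deriv g t ≠ 0 := by
    intro t ht
    obtain ⟨hIoo, hzero⟩ := (hZsmem t).1 ht
    rcases lt_or_ge t 1 with hlt | hge
    · exact hreg t ⟨⟨by linarith [haIoo.1, hIoo.1], hlt⟩, hzero⟩
    · have h1 : deriv g t = deriv g (t - 1) := by
        have := hgdper (t - 1)
        rw [sub_add_cancel] at this
        exact this
      rw [h1]
      apply hreg (t - 1)
      have hgz : g (t - 1) = 0 := by
        have := hgper (t - 1)
        rw [sub_add_cancel] at this
        rw [← this]; exact hzero
      exact ⟨⟨by linarith, by linarith [haIoo.2, hIoo.2]⟩, hgz⟩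
  -- apply the counting lemma on [a, a+1] ⊆ [-1, 2]
  have hcount := count_interval (lo := -1) (hi := 2) hLcont hlift
    (fun t => by rw [hg]) hgder Zs.card Zs a (a + 1) rfl
    (by linarith [haIoo.1]) (by linarith) (by linarith [haIoo.2])
    (fun t ht => ⟨fun h => (hZsmem t).2 ⟨ht, h⟩, fun h => ((hZsmem t).1 h).2⟩)
    hZssub hZssimp hga hga1
  -- the winding relation
  have hwind := hn a ⟨by linarith [haIoo.1], by linarith [haIoo.2]⟩
  have hθ : (L (a + 1)).im = (L a).im + (n : ℝ) * (2 * Real.pi) := by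
    have := congrArg Complex.im hwind
    simp only [Complex.sub_im] at this
    have h2 : ((n : ℂ) * (2 * (Real.pi : ℂ) * I)).im = (n : ℝ) * (2 * Real.pi) := by
      simp [Complex.mul_im, Complex.mul_re]
    rw [h2] at this
    linarith
  have hfloor : ⌊(L (a + 1)).im / Real.pi⌋ = ⌊(L a).im / Real.pi⌋ + 2 * n := by
    rw [hθ]
    have hπ : Real.pi ≠ 0 := Real.pi_ne_zero
    have : ((L a).im + (n : ℝ) * (2 * Real.pi)) / Real.pi
        = (L a).im / Real.pi + (2 * n : ℤ) := by
      push_cast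
      field_simp
    rw [this, Int.floor_add_intCast]
  rw [hfloor] at hcount
  -- transfer the sum from Zs to Z
  set T : ℝ → ℝ := fun t => Real.sign ((f t).re) * Real.sign (deriv g t) with hT
  have hTper : ∀ t, T (t + 1) = T t := by
    intro t
    simp only [hT, hfper t, hgdper t]
  have hdisj : Disjoint A (B.image (fun t => t + 1)) := by
    rw [Finset.disjoint_left]
    intro t htA htB
    rw [hA, Finset.mem_filter, hZmem] at htA
    rw [Finset.mem_image] at htB
    obtain ⟨z, hzB, hzt⟩ := htB
    rw [hB, Finset.mem_filter, hZmem] at hzB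
    have h1 : t < 1 := htA.1.1.2
    have h2 : (0:ℝ) ≤ z := hzB.1.1.1
    rw [← hzt] at h1
    linarith
  have hsum1 : ∑ t ∈ Zs, T t = ∑ t ∈ A, T t + ∑ t ∈ B, T t := by
    rw [hZs, Finset.sum_union hdisj]
    congr 1
    rw [Finset.sum_image (by intro x _ y _ h; linarith [h] : ∀ x ∈ B, ∀ y ∈ B,
      x + 1 = y + 1 → x = y)]
    exact Finset.sum_congr rfl (fun z _ => hTper z)
  have hsum2 : ∑ t ∈ A, T t + ∑ t ∈ B, T t = ∑ t ∈ Z, T t := by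
    have := Finset.sum_filter_add_sum_filter_not Z (fun t => a < t) T
    rw [← this]
    congr 1
    have hBeq : Z.filter (fun x => ¬ a < x) = B := by
      rw [hB]
      apply Finset.filter_congr
      intro t htZ
      rw [hZmem] at htZ
      have hta : t ≠ a := fun h => hga (h ▸ htZ.2)
      simp only [not_lt, decide_eq_true_eq]
      constructor
      · intro h; exact lt_of_le_of_ne h hta
      · intro h; exact h.le
    rw [hBeq]
  -- conclude
  have hTsum : ∑ t ∈ Z, T t = 2 * (n : ℝ) := by
    rw [← hsum2, ← hsum1, hcount]
    push_cast
    ring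
  calc ∑ t ∈ Z, -Real.sign ((f t).re) * Real.sign (deriv g t)
      = -∑ t ∈ Z, T t := by
        rw [← Finset.sum_neg_distrib]
        exact Finset.sum_congr rfl (fun t _ => by rw [hT]; ring)
    _ = -(2 * (n : ℝ)) := by rw [hTsum]

end Assemble



/-- Invariance of the algebraic number `N₁(p, γ)` of tangent lines through `p` under
regular homotopy of `γ` in the class of immersions in `ℂ ∖ {p}`. -/
theorem tangent_lines_count_regular_homotopy_invariant (p : ℂ)
    (γ₀ γ₁ : ℝ → ℂ) (hγ₀ : ContDiff ℝ 2 γ₀) (hγ₁ : ContDiff ℝ 2 γ₁)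
    (hper₀ : ∀ t, γ₀ (t + 1) = γ₀ t) (hper₁ : ∀ t, γ₁ (t + 1) = γ₁ t)
    (himm₀ : ∀ t, deriv γ₀ t ≠ 0) (himm₁ : ∀ t, deriv γ₁ t ≠ 0)
    (hp₀ : ∀ t, γ₀ t ≠ p) (hp₁ : ∀ t, γ₁ t ≠ p)
    (H : ℝ → ℝ → ℂ)
    (hcont : ContinuousOn (fun q : ℝ × ℝ => H q.1 q.2) (Set.univ ×ˢ Set.Icc 0 1))
    (hHper : ∀ t : ℝ, ∀ s ∈ Set.Icc (0:ℝ) 1, H (t + 1) s = H t s)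
    (hHne : ∀ t : ℝ, ∀ s ∈ Set.Icc (0:ℝ) 1, H t s ≠ p)
    (hHC1 : ∀ s ∈ Set.Icc (0:ℝ) 1, ContDiff ℝ 1 (fun t => H t s))
    (hHimm : ∀ t : ℝ, ∀ s ∈ Set.Icc (0:ℝ) 1, deriv (fun t' => H t' s) t ≠ 0)
    (hderivcont : ContinuousOn (fun q : ℝ × ℝ => deriv (fun t' => H t' q.2) q.1)
      (Set.univ ×ˢ Set.Icc 0 1))
    (hH₀ : ∀ t, H t 0 = γ₀ t) (hH₁ : ∀ t, H t 1 = γ₁ t)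
    (g₀ g₁ : ℝ → ℝ)
    (hg₀ : g₀ = fun t => (star (deriv γ₀ t) * (γ₀ t - p)).im)
    (hg₁ : g₁ = fun t => (star (deriv γ₁ t) * (γ₁ t - p)).im)
    (hZ₀ : {t ∈ Set.Ico (0:ℝ) 1 | g₀ t = 0}.Finite)
    (hZ₁ : {t ∈ Set.Ico (0:ℝ) 1 | g₁ t = 0}.Finite)
    (hreg₀ : ∀ t ∈ {t ∈ Set.Ico (0:ℝ) 1 | g₀ t = 0}, deriv g₀ t ≠ 0)
    (hreg₁ : ∀ t ∈ {t ∈ Set.Ico (0:ℝ) 1 | g₁ t = 0}, deriv g₁ t ≠ 0) :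
    ∑ t ∈ hZ₀.toFinset,
        -Real.sign ((star (deriv γ₀ t) * (γ₀ t - p)).re) * Real.sign (deriv g₀ t)
      = ∑ t ∈ hZ₁.toFinset,
          -Real.sign ((star (deriv γ₁ t) * (γ₁ t - p)).re) * Real.sign (deriv g₁ t) := by
  classical
  -- the homotopy of tangency functions
  set F : ℝ → ℝ → ℂ := fun t s => star (deriv (fun t' => H t' s) t) * (H t s - p) with hF
  set G : ℝ × ℝ → ℂ := fun q => F q.1 q.2 with hG
  have hGcont : ContinuousOn G (Set.univ ×ˢ Set.Icc 0 1) := by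
    apply ContinuousOn.mul
    · exact continuous_star.comp_continuousOn hderivcont
    · exact hcont.sub continuousOn_const
  have hfscont : ∀ s ∈ Set.Icc (0:ℝ) 1, ContinuousOn (fun t => F t s) (Icc (-1) 2) := by
    intro s hs
    have : (fun t => F t s) = G ∘ (fun t => (t, s)) := rfl
    rw [this]
    apply hGcont.comp (continuous_id.prodMk continuous_const).continuousOn
    intro t _
    exact ⟨trivial, hs⟩
  have hfs0 : ∀ s ∈ Set.Icc (0:ℝ) 1, ∀ t ∈ Icc (-1:ℝ) 2, F t s ≠ 0 := by
    intro s hs t _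
    exact mul_ne_zero (star_ne_zero.2 (hHimm t s hs)) (sub_ne_zero.2 (hHne t s hs))
  have hfsper : ∀ s ∈ Set.Icc (0:ℝ) 1, ∀ t, F (t + 1) s = F t s := by
    intro s hs t
    have h1 : deriv (fun t' => H t' s) (t + 1) = deriv (fun t' => H t' s) t :=
      deriv_periodic (fun t' => hHper t' s hs) t
    simp only [hF, h1, hHper t s hs]
  -- the winding integer
  have hwind : ∀ s ∈ Set.Icc (0:ℝ) 1, ∃ n : ℤ, ∀ L : ℝ → ℂ, ContinuousOn L (Icc (-1) 2) →
      (∀ t ∈ Icc (-1 : ℝ) 2, Complex.exp (L t) = F t s) →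
      ∀ t ∈ Icc (-1 : ℝ) 1, L (t + 1) - L t = (n : ℂ) * (2 * Real.pi * I) :=
    fun s hs => wind_exists (hfscont s hs) (hfs0 s hs) (hfsper s hs)
  set N : ℝ → ℤ := fun s => if h : s ∈ Set.Icc (0:ℝ) 1 then (hwind s h).choose else 0 with hNdef
  have hN : ∀ s (hs : s ∈ Set.Icc (0:ℝ) 1), ∀ L : ℝ → ℂ, ContinuousOn L (Icc (-1) 2) →
      (∀ t ∈ Icc (-1 : ℝ) 2, Complex.exp (L t) = F t s) →
      ∀ t ∈ Icc (-1 : ℝ) 1, L (t + 1) - L t = ((N s : ℤ) : ℂ) * (2 * Real.pi * I) := by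
    intro s hs
    simp only [hNdef, dif_pos hs]
    exact (hwind s hs).choose_spec
  -- local constancy of N
  have hKsub : (Icc (-1:ℝ) 2) ×ˢ (Set.Icc (0:ℝ) 1) ⊆ Set.univ ×ˢ Set.Icc 0 1 :=
    Set.prod_mono (subset_univ _) (le_refl _)
  have hKcomp : IsCompact ((Icc (-1:ℝ) 2) ×ˢ (Set.Icc (0:ℝ) 1)) :=
    isCompact_Icc.prod isCompact_Icc
  have hGuc : UniformContinuousOn G ((Icc (-1:ℝ) 2) ×ˢ (Set.Icc (0:ℝ) 1)) :=
    hKcomp.uniformContinuousOn_of_continuous (hGcont.mono hKsub)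
  have hlocconst : ∀ s₀ ∈ Set.Icc (0:ℝ) 1, ∃ δ > 0, ∀ s ∈ Set.Icc (0:ℝ) 1,
      dist s s₀ < δ → N s = N s₀ := by
    intro s₀ hs₀
    -- minimum of ‖F · s₀‖
    obtain ⟨t₀, ht₀, hmin'⟩ := isCompact_Icc.exists_isMinOn (nonempty_Icc.2 (by norm_num))
      ((hfscont s₀ hs₀).norm)
    have hmin := isMinOn_iff.1 hmin'
    set m := ‖F t₀ s₀‖ with hm
    have hmpos : 0 < m := norm_pos_iff.2 (hfs0 s₀ hs₀ t₀ ht₀)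
    obtain ⟨δ, hδpos, hδ⟩ := Metric.uniformContinuousOn_iff.1 hGuc m hmpos
    refine ⟨δ, hδpos, ?_⟩
    intro s hs hdist
    have hclose : ∀ t ∈ Icc (-1:ℝ) 2, ‖F t s - F t s₀‖ < ‖F t s₀‖ := by
      intro t ht
      have h1 : dist ((t, s) : ℝ × ℝ) (t, s₀) < δ := by
        rw [Prod.dist_eq, dist_self]
        simp only [max_eq_right dist_nonneg]
        exact hdist
      have h2 := hδ (t, s) ⟨ht, hs⟩ (t, s₀) ⟨ht, hs₀⟩ h1
      rw [dist_eq_norm] at h2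
      exact lt_of_lt_of_le h2 (hmin t ht)
    exact (wind_congr (hfscont s₀ hs₀) (hfs0 s₀ hs₀) (hfscont s hs) (hfsper s₀ hs₀)
      (hfsper s hs) hclose (hN s₀ hs₀) (hN s hs)).symm
  -- N is constant on [0,1]
  have hNcont : ContinuousOn (fun s => ((N s : ℤ) : ℝ)) (Set.Icc 0 1) := by
    intro s₀ hs₀
    obtain ⟨δ, hδpos, hδ⟩ := hlocconst s₀ hs₀
    have hev : (fun s => ((N s : ℤ) : ℝ)) =ᶠ[nhdsWithin s₀ (Set.Icc 0 1)]
        (fun _ => ((N s₀ : ℤ) : ℝ)) := by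
      rw [Filter.eventuallyEq_iff_exists_mem]
      refine ⟨{s | dist s s₀ < δ} ∩ Set.Icc 0 1, ?_, ?_⟩
      · exact Filter.inter_mem (mem_nhdsWithin_of_mem_nhds (Metric.ball_mem_nhds s₀ hδpos))
          self_mem_nhdsWithin
      · intro s hsmem
        simp only
        rw [hδ s hsmem.2 hsmem.1]
    exact (continuousWithinAt_const).congr_of_eventuallyEq hev rfl
  have hN01 : N 1 = N 0 := by
    have := intvalued_const (by norm_num : (0:ℝ) ≤ 1) hNcont
      (fun s _ => ⟨N s, rfl⟩)
    exact_mod_cast this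
  -- loop 0
  have h0mem : (0:ℝ) ∈ Set.Icc (0:ℝ) 1 := by norm_num
  have h1mem : (1:ℝ) ∈ Set.Icc (0:ℝ) 1 := by norm_num
  have hf0eq : (fun t => F t 0) = (fun t => star (deriv γ₀ t) * (γ₀ t - p)) := by
    funext t
    have hfun : (fun t' => H t' 0) = γ₀ := funext hH₀
    simp only [hF, hfun, hH₀ t]
  have hf1eq : (fun t => F t 1) = (fun t => star (deriv γ₁ t) * (γ₁ t - p)) := by
    funext t
    have hfun : (fun t' => H t' 1) = γ₁ := funext hH₁
    simp only [hF, hfun, hH₁ t]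
  obtain ⟨L₀, hL₀cont, hL₀lift⟩ := exists_lift (by norm_num) (hfscont 0 h0mem) (hfs0 0 h0mem)
  obtain ⟨L₁, hL₁cont, hL₁lift⟩ := exists_lift (by norm_num) (hfscont 1 h1mem) (hfs0 1 h1mem)
  have hN₀ := hN 0 h0mem L₀ hL₀cont hL₀lift
  have hN₁ := hN 1 h1mem L₁ hL₁cont hL₁lift
  have hsum₀ := loop_count p γ₀ hγ₀ hper₀ himm₀ hp₀ g₀ hg₀ hZ₀ hreg₀ L₀ hL₀cont
    (by intro t ht; rw [hL₀lift t ht, congrFun hf0eq t]) (N 0) hN₀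
  have hsum₁ := loop_count p γ₁ hγ₁ hper₁ himm₁ hp₁ g₁ hg₁ hZ₁ hreg₁ L₁ hL₁cont
    (by intro t ht; rw [hL₁lift t ht, congrFun hf1eq t]) (N 1) hN₁
  rw [hsum₀, hsum₁, hN01]

end
end
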